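/- arXiv:2209.06492 — 7 statements merged into one kernel-verified Lean document; each statement's English description precedes it below -/
import Mathlib

section
/- Let (G,𝒮) be a profinite group pair. If every lifting problem of G relative to 𝒮 whose kernel is a finite abelian group has a solution, then every lifting problem of G relative to 𝒮 whose kernel is a finite solvable group has a solution. -/
/-- The sheaf space `𝒮 = {(g,x) ∈ G × X | g ∈ S x}` of a family of subgroups. -/
abbrev SheafSpace {G X : Type} [Group G] [TopologicalSpace G] [TopologicalSpace X]
    (S : X → Subgroup G) : Type := {gx : G × X // gx.1 ∈ S gx.2}

/-- The data `(α, φ, σ)` forms a lifting problem of `G` relative to `𝒮`: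
`α : H → Q` is a continuous surjection of profinite groups, `φ : G → Q` a continuous
homomorphism, and `σ : 𝒮 → H` a continuous map which is a homomorphism `S x → H` on each
fibre, lifting `φ` there. -/
def IsLiftingProblem {G X H Q : Type} [Group G] [TopologicalSpace G] [TopologicalSpace X]
    [Group H] [TopologicalSpace H] [Group Q] [TopologicalSpace Q]
    (S : X → Subgroup G) (α : H →* Q) (φ : G →* Q) (σ : SheafSpace S → H) : Prop :=
  Continuous α ∧ Function.Surjective α ∧ Continuous φ ∧ Continuous σ ∧
  (∀ (x : X) (s s' : G) (hs : s ∈ S x) (hs' : s' ∈ S x),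
      σ ⟨(s * s', x), mul_mem hs hs'⟩ = σ ⟨(s, x), hs⟩ * σ ⟨(s', x), hs'⟩) ∧
  (∀ (x : X) (s : G) (hs : s ∈ S x), α (σ ⟨(s, x), hs⟩) = φ s)

/-- A solution of the lifting problem `(α, φ, σ)`: a continuous homomorphism `φ̄ : G → H`
with `α ∘ φ̄ = φ` and a continuous map `c : X → ker α` with
`c x * φ̄ s * (c x)⁻¹ = σ (s, x)` for all `x ∈ X` and `s ∈ S x`. -/
def HasSolution {G X H Q : Type} [Group G] [TopologicalSpace G] [TopologicalSpace X]
    [Group H] [TopologicalSpace H] [Group Q] [TopologicalSpace Q]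
    (S : X → Subgroup G) (α : H →* Q) (φ : G →* Q) (σ : SheafSpace S → H) : Prop :=
  ∃ (φbar : G →* H) (c : X → H),
    Continuous φbar ∧ (∀ g, α (φbar g) = φ g) ∧
    Continuous c ∧ (∀ x, c x ∈ α.ker) ∧
    ∀ (x : X) (s : G) (hs : s ∈ S x), c x * φbar s * (c x)⁻¹ = σ ⟨(s, x), hs⟩


open QuotientGroup in
lemma quot_totallyDisconnected {H : Type} [Group H] [TopologicalSpace H] [IsTopologicalGroup H]
    [CompactSpace H] [T2Space H] [TotallyDisconnectedSpace H]
    (N : Subgroup H) [N.Normal] (hfin : (N : Set H).Finite) :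
    TotallyDisconnectedSpace (H ⧸ N) := by
  haveI : IsClosed (N : Set H) := hfin.isClosed
  rw [loc_compact_t2_tot_disc_iff_tot_sep]
  haveI hsep : TotallySeparatedSpace H := loc_compact_t2_tot_disc_iff_tot_sep.mp ‹_›
  constructor
  intro x _ y _ hxy
  obtain ⟨a, rfl⟩ := mk_surjective x
  obtain ⟨b, rfl⟩ := mk_surjective y
  set F : Set H := (fun n => a⁻¹ * b * n) '' (N : Set H) with hFdef
  have hF : F.Finite := hfin.image _
  have h1F : (1 : H) ∉ F := by
    rintro ⟨n, hn, h⟩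
    apply hxy
    rw [QuotientGroup.eq]
    have hab : a⁻¹ * b = n⁻¹ := eq_inv_of_mul_eq_one_left h
    rw [hab]; exact inv_mem hn
  -- choose clopen sets separating 1 from each element of F
  have hWex : ∀ f : H, ∃ U : Set H, IsClopen U ∧ (1 : H) ∈ U ∧ (f ∈ F → f ∉ U) := by
    intro f
    by_cases hf : f ∈ F
    · obtain ⟨U, hU, h1U, hfU⟩ :=
        exists_isClopen_of_totally_separated (i := (1 : H)) (j := f)
          (fun h => h1F (h ▸ hf))
      exact ⟨U, hU, h1U, fun _ => hfU⟩
    · exact ⟨Set.univ, isClopen_univ, trivial, fun h => absurd h hf⟩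
  choose W hWclopen h1W hFW using hWex
  set W0 : Set H := ⋂ f ∈ F, W f with hW0def
  have hW0clopen : IsClopen W0 := hF.isClopen_biInter (fun f _ => hWclopen f)
  have h1W0 : (1 : H) ∈ W0 := Set.mem_biInter fun f _ => h1W f
  have hW0F : ∀ f ∈ F, f ∉ W0 := fun f hf hmem =>
    hFW f hf (Set.mem_iInter₂.mp hmem f hf)
  obtain ⟨U, hUW0⟩ := IsTopologicalGroup.exist_openNormalSubgroup_sub_clopen_nhds_of_one hW0clopen h1W0
  -- the left coset a * U
  set A : Set H := (a * ·) '' (U : Set H) with hAdef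
  have hAopen : IsOpen A := (Homeomorph.mulLeft a).isOpenMap _ U.isOpen
  have hAclosed : IsClosed A := (Homeomorph.mulLeft a).isClosedMap _ U.toOpenSubgroup.isClosed
  set V : Set (H ⧸ N) := QuotientGroup.mk '' A with hVdef
  have hVopen : IsOpen V := QuotientGroup.isOpenMap_coe A hAopen
  have hpre : (QuotientGroup.mk : H → H ⧸ N) ⁻¹' V = ⋃ n ∈ (N : Set H), (· * n) '' A := by
    ext h
    simp only [Set.mem_preimage, hVdef, Set.mem_image, Set.mem_iUnion, Set.mem_image]
    constructor
    · rintro ⟨g, hg, hgh⟩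
      have : g⁻¹ * h ∈ N := (QuotientGroup.eq).mp hgh
      exact ⟨g⁻¹ * h, this, g, hg, by group⟩
    · rintro ⟨n, hn, g, hg, rfl⟩
      exact ⟨g, hg, (QuotientGroup.eq).mpr (by simpa using hn)⟩
  have hVclosed : IsClosed V := by
    rw [← (QuotientGroup.isQuotientMap_mk N).isClosed_preimage, hpre]
    exact hfin.isClosed_biUnion fun n _ =>
      (Homeomorph.mulRight n).isClosedMap _ hAclosed
  have haV : (QuotientGroup.mk a : H ⧸ N) ∈ V := ⟨a, ⟨1, U.one_mem, by group⟩, rfl⟩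
  have hbV : (QuotientGroup.mk b : H ⧸ N) ∉ V := by
    rintro ⟨g, ⟨u, hu, rfl⟩, hgb⟩
    have hn : (a * u)⁻¹ * b ∈ N := (QuotientGroup.eq).mp hgb
    have hmemF : a⁻¹ * b * ((a * u)⁻¹ * b)⁻¹ ∈ F := ⟨((a * u)⁻¹ * b)⁻¹, inv_mem hn, rfl⟩
    have hval : a⁻¹ * b * ((a * u)⁻¹ * b)⁻¹ = u := by group
    exact hW0F _ hmemF (by rw [hval]; exact hUW0 hu)
  exact ⟨V, Vᶜ, hVopen, hVclosed.isOpen_compl, haV, hbV, fun z _ => by by_cases h : z ∈ V; exacts [Or.inl h, Or.inr h], disjoint_compl_right⟩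


open scoped commutatorElement in
lemma lifting_induction
    (G : Type) [Group G] [TopologicalSpace G] [IsTopologicalGroup G]
    [CompactSpace G] [T2Space G] [TotallyDisconnectedSpace G]
    (X : Type) [TopologicalSpace X] [CompactSpace X] [T2Space X]
    [TotallyDisconnectedSpace X]
    (S : X → Subgroup G)
    (hab : ∀ (H Q : Type) [Group H] [TopologicalSpace H] [IsTopologicalGroup H]
        [CompactSpace H] [T2Space H] [TotallyDisconnectedSpace H]
        [Group Q] [TopologicalSpace Q] [IsTopologicalGroup Q]
        [CompactSpace Q] [T2Space Q] [TotallyDisconnectedSpace Q]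
        (α : H →* Q) (φ : G →* Q) (σ : SheafSpace S → H),
        IsLiftingProblem S α φ σ → Finite α.ker → (∀ a b : α.ker, a * b = b * a) →
        HasSolution S α φ σ) :
    ∀ (n : ℕ) (H Q : Type) [Group H] [TopologicalSpace H] [IsTopologicalGroup H]
        [CompactSpace H] [T2Space H] [TotallyDisconnectedSpace H]
        [Group Q] [TopologicalSpace Q] [IsTopologicalGroup Q]
        [CompactSpace Q] [T2Space Q] [TotallyDisconnectedSpace Q]
        (α : H →* Q) (φ : G →* Q) (σ : SheafSpace S → H),
      IsLiftingProblem S α φ σ → Finite α.ker → IsSolvable α.ker →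
      Nat.card α.ker ≤ n → HasSolution S α φ σ := by
  intro n
  induction n with
  | zero =>
    intro H Q _ _ _ _ _ _ _ _ _ _ _ _ α φ σ _ hfin _ hcard
    have : 0 < Nat.card α.ker := Nat.card_pos
    omega
  | succ n ih =>
    intro H Q _ _ _ _ _ _ _ _ _ _ _ _ α φ σ hlp hfin hsolv hcard
    obtain ⟨hαc, hαs, hφc, hσc, hσm, hσl⟩ := hlp
    by_cases hcomm : ∀ a b : α.ker, a * b = b * a
    · exact hab H Q α φ σ ⟨hαc, hαs, hφc, hσc, hσm, hσl⟩ hfin hcomm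
    set K : Subgroup H := α.ker with hKdef
    haveI : K.Normal := α.normal_ker
    set N : Subgroup H := ⁅K, K⁆ with hNdef
    haveI : N.Normal := Subgroup.commutator_normal K K
    have hNK : N ≤ K := Subgroup.commutator_le_left K K
    have hKfin : (K : Set H).Finite := Set.toFinite _
    have hNfin : (N : Set H).Finite := hKfin.subset hNK
    haveI hNfin' : Finite ↥N := hNfin.to_subtype
    -- K is not equal to N (solvability)
    have hex : ∃ a b : ↥K, a * b ≠ b * a := by push_neg at hcomm; exact hcomm
    have hNneK : N ≠ K := by
      intro hEq
      obtain ⟨a, b, hne⟩ := hex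
      have hg1 : ⁅a, b⁆ ≠ 1 := by
        intro h; exact hne (commutatorElement_eq_one_iff_mul_comm.mp h)
      have hmapcomm : Subgroup.map K.subtype (commutator ↥K) = N := by
        rw [commutator_def, Subgroup.map_commutator, hNdef]
        congr 1 <;> rw [← MonoidHom.range_eq_map, Subgroup.range_subtype]
      have htop : commutator ↥K = ⊤ := by
        apply Subgroup.map_injective K.subtype_injective
        rw [hmapcomm, hEq, ← MonoidHom.range_eq_map, Subgroup.range_subtype]
      have hds : ∀ m : ℕ, derivedSeries ↥K m = ⊤ := by
        intro m
        induction m with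
        | zero => exact derivedSeries_zero ↥K
        | succ m ihm =>
          rw [derivedSeries_succ, ihm, ← commutator_def, htop]
      exact not_solvable_of_mem_derivedSeries hg1
        (fun m => by rw [hds m]; trivial) hsolv
    -- N is strictly smaller than K
    have hcardN : Nat.card ↥N < Nat.card ↥K := by
      have h1 : Nat.card ↥(N : Set H) < Nat.card ↥(K : Set H) := by
        rw [Nat.card_coe_set_eq, Nat.card_coe_set_eq]
        exact Set.ncard_lt_ncard ⟨hNK, fun h => hNneK (le_antisymm hNK h)⟩ hKfin
      exact h1
    -- set up the quotient H ⧸ N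
    haveI hNclosed : IsClosed (N : Set H) := hNfin.isClosed
    haveI : TotallyDisconnectedSpace (H ⧸ N) := quot_totallyDisconnected N hNfin
    have hNker : N ≤ α.ker := hNK
    set π : H →* H ⧸ N := QuotientGroup.mk' N with hπdef
    set α₂ : H ⧸ N →* Q := QuotientGroup.lift N α hNker with hα₂def
    have hπα : ∀ h : H, α₂ (π h) = α h := fun h => rfl
    have hπc : Continuous π := continuous_quot_mk
    have hπs : Function.Surjective π := QuotientGroup.mk_surjective
    have hα₂c : Continuous α₂ := continuous_quot_lift _ hαc
    have hα₂s : Function.Surjective α₂ := fun q => by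
      obtain ⟨h, rfl⟩ := hαs q; exact ⟨π h, hπα h⟩
    have hkerα₂ : ∀ z : H ⧸ N, z ∈ α₂.ker ↔ ∃ k ∈ K, π k = z := by
      intro z
      obtain ⟨h, rfl⟩ := hπs z
      constructor
      · intro hz
        exact ⟨h, by rwa [MonoidHom.mem_ker, hπα] at hz, rfl⟩
      · rintro ⟨k, hk, hkz⟩
        rw [MonoidHom.mem_ker, ← hkz, hπα]
        exact hk
    -- the kernel of α₂ is finite
    have hsurjker : Function.Surjective
        (fun k : ↥K => (⟨π k, (hkerα₂ _).mpr ⟨k, k.2, rfl⟩⟩ : ↥α₂.ker)) := by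
      rintro ⟨z, hz⟩
      obtain ⟨k, hk, hkz⟩ := (hkerα₂ z).mp hz
      exact ⟨⟨k, hk⟩, Subtype.ext hkz⟩
    haveI hkerα₂fin : Finite ↥α₂.ker := Finite.of_surjective _ hsurjker
    -- the kernel of α₂ is commutative
    have hkerα₂comm : ∀ a b : ↥α₂.ker, a * b = b * a := by
      rintro ⟨za, hza⟩ ⟨zb, hzb⟩
      obtain ⟨ka, hka, rfl⟩ := (hkerα₂ za).mp hza
      obtain ⟨kb, hkb, rfl⟩ := (hkerα₂ zb).mp hzb
      apply Subtype.ext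
      show π ka * π kb = π kb * π ka
      rw [← map_mul, ← map_mul]
      show QuotientGroup.mk _ = QuotientGroup.mk _
      rw [QuotientGroup.eq]
      have : (ka * kb)⁻¹ * (kb * ka) = ⁅kb⁻¹, ka⁻¹⁆ := by
        rw [commutatorElement_def]; group
      rw [this]
      exact Subgroup.commutator_mem_commutator (inv_mem hkb) (inv_mem hka)
    -- solve the abelian lifting problem for α₂
    set σ₂ : SheafSpace S → H ⧸ N := fun p => π (σ p) with hσ₂def
    obtain ⟨φb₂, c₂, hφb₂c, hφb₂l, hc₂c, hc₂ker, hc₂conj⟩ :=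
      hab (H ⧸ N) Q α₂ φ σ₂
        ⟨hα₂c, hα₂s, hφc, hπc.comp hσc,
         fun x s s' hs hs' => by simp only [hσ₂def, hσm x s s' hs hs', map_mul],
         fun x s hs => by rw [hσ₂def]; dsimp only; rw [hπα]; exact hσl x s hs⟩
        hkerα₂fin hkerα₂comm
    -- lift c₂ to a continuous map d : X → H
    haveI : Finite ↥α₂.ker := hkerα₂fin
    set c₂' : X → ↥α₂.ker := fun x => ⟨c₂ x, hc₂ker x⟩ with hc₂'def
    have hc₂'c : Continuous c₂' := hc₂c.subtype_mk _
    set d : X → H := fun x => Quotient.out ((c₂' x : H ⧸ N)) with hddef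
    have hdc : Continuous d := by
      have : Continuous (fun a : ↥α₂.ker => Quotient.out ((a : H ⧸ N))) :=
        continuous_of_discreteTopology
      exact this.comp hc₂'c
    have hd : ∀ x, π (d x) = c₂ x := fun x => QuotientGroup.out_eq' (c₂ x)
    have hdker : ∀ x, d x ∈ K := by
      intro x
      have : α₂ (π (d x)) = 1 := by rw [hd x]; exact hc₂ker x
      rwa [hπα] at this
    -- the twisted lifting problem for π with kernel N
    set σ₁ : SheafSpace S → H := fun p => (d p.1.2)⁻¹ * σ p * d p.1.2 with hσ₁def
    have hσ₁c : Continuous σ₁ := by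
      have hdp : Continuous (fun p : SheafSpace S => d p.1.2) :=
        hdc.comp (continuous_snd.comp continuous_subtype_val)
      exact ((hdp.inv).mul hσc).mul hdp
    have hπσ₁ : ∀ (x : X) (s : G) (hs : s ∈ S x), π (σ₁ ⟨(s, x), hs⟩) = φb₂ s := by
      intro x s hs
      rw [hσ₁def]
      dsimp only
      rw [map_mul, map_mul, map_inv, hd x]
      have : π (σ ⟨(s, x), hs⟩) = σ₂ ⟨(s, x), hs⟩ := rfl
      rw [this, ← hc₂conj x s hs]
      group
    have hkerπ : π.ker = N := QuotientGroup.ker_mk' N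
    haveI hπkerfin : Finite ↥π.ker := by rw [hkerπ]; exact hNfin'
    haveI hπkersolv : IsSolvable ↥π.ker := by
      rw [hkerπ]
      haveI : Group.IsSolvable ↥K := hsolv
      exact solvable_of_solvable_injective (Subgroup.inclusion_injective hNK)
    have hπkercard : Nat.card ↥π.ker ≤ n := by
      rw [hkerπ]; omega
    obtain ⟨φb₁, c₁, hφb₁c, hφb₁l, hc₁c, hc₁ker, hc₁conj⟩ :=
      ih H (H ⧸ N) π φb₂ σ₁
        ⟨hπc, hπs, hφb₂c, hσ₁c,
         fun x s s' hs hs' => by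
           simp only [hσ₁def, hσm x s s' hs hs']; group,
         hπσ₁⟩
        hπkerfin hπkersolv hπkercard
    -- assemble the solution
    refine ⟨φb₁, fun x => d x * c₁ x, hφb₁c, ?_, (hdc.mul hc₁c), ?_, ?_⟩
    · intro g
      rw [← hπα, hφb₁l g]
      exact hφb₂l g
    · intro x
      have h1 : α (d x) = 1 := by rw [← hπα, hd x]; exact hc₂ker x
      have h2 : α (c₁ x) = 1 := by
        have := hc₁ker x
        rw [hkerπ] at this
        exact hNker this
      rw [MonoidHom.mem_ker, map_mul, h1, h2, one_mul]
    · intro x s hs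
      have h1 := hc₁conj x s hs
      have : d x * (c₁ x * φb₁ s * (c₁ x)⁻¹) * (d x)⁻¹ = σ ⟨(s, x), hs⟩ := by
        rw [h1, hσ₁def]
        dsimp only
        group
      rw [← this]
      group


/-- Let `(G,𝒮)` be a profinite group pair. If every lifting problem of `G`
relative to `𝒮` with finite abelian kernel has a solution, then every lifting problem of `G`
relative to `𝒮` with finite solvable kernel has a solution. -/
theorem solvable_kernel_lifting
    (G : Type) [Group G] [TopologicalSpace G] [IsTopologicalGroup G]
    [CompactSpace G] [T2Space G] [TotallyDisconnectedSpace G]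
    (X : Type) [TopologicalSpace X] [CompactSpace X] [T2Space X]
    [TotallyDisconnectedSpace X]
    (S : X → Subgroup G) (hclosed : ∀ x, IsClosed (S x : Set G))
    (hidx : IsClosed {gx : G × X | gx.1 ∈ S gx.2})
    (hab : ∀ (H Q : Type) [Group H] [TopologicalSpace H] [IsTopologicalGroup H]
        [CompactSpace H] [T2Space H] [TotallyDisconnectedSpace H]
        [Group Q] [TopologicalSpace Q] [IsTopologicalGroup Q]
        [CompactSpace Q] [T2Space Q] [TotallyDisconnectedSpace Q]
        (α : H →* Q) (φ : G →* Q) (σ : SheafSpace S → H),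
        IsLiftingProblem S α φ σ → Finite α.ker → (∀ a b : α.ker, a * b = b * a) →
        HasSolution S α φ σ) :
    ∀ (H Q : Type) [Group H] [TopologicalSpace H] [IsTopologicalGroup H]
        [CompactSpace H] [T2Space H] [TotallyDisconnectedSpace H]
        [Group Q] [TopologicalSpace Q] [IsTopologicalGroup Q]
        [CompactSpace Q] [T2Space Q] [TotallyDisconnectedSpace Q]
        (α : H →* Q) (φ : G →* Q) (σ : SheafSpace S → H),
      IsLiftingProblem S α φ σ → Finite α.ker → IsSolvable α.ker →
      HasSolution S α φ σ := by
  intro H Q _ _ _ _ _ _ _ _ _ _ _ _ α φ σ hlp hfin hsolv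
  exact lifting_induction G X S hab (Nat.card α.ker) H Q α φ σ hlp hfin hsolv le_rfl
end

section
/- Let (G,𝒮) be a profinite group pair. If every lifting problem of G relative to 𝒮 with finite kernel has a solution, then every lifting problem of G relative to 𝒮 (with arbitrary closed kernel) has a solution. -/
/-! ### Auxiliary topological lemmas -/

section TopAux

open Pointwise

open Set

/-- Closed graph (into a compact space) implies continuous. -/
theorem AKL.continuous_of_isClosed_graph {X Y : Type} [TopologicalSpace X] [TopologicalSpace Y]
    [CompactSpace Y] {f : X → Y} (h : IsClosed {p : X × Y | p.2 = f p.1}) : Continuous f := by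
  rw [continuous_iff_isClosed]
  intro C hC
  have : f ⁻¹' C = Prod.fst '' ({p : X × Y | p.2 = f p.1} ∩ (univ ×ˢ C)) := by
    ext x
    constructor
    · intro hx; exact ⟨(x, f x), ⟨rfl, ⟨trivial, hx⟩⟩, rfl⟩
    · rintro ⟨⟨a, b⟩, ⟨hab, -, hb⟩, rfl⟩
      rw [Set.mem_preimage, ← hab]; exact hb
  rw [this]
  exact isClosedMap_fst_of_compactSpace _ (h.inter (isClosed_univ.prod hC))

/-- An open normal subgroup inside any open neighbourhood of `1` in a profinite group. -/
theorem AKL.exists_ons {H : Type} [Group H] [TopologicalSpace H] [IsTopologicalGroup H]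
    [CompactSpace H] [T2Space H] [TotallyDisconnectedSpace H]
    {W : Set H} (hW : IsOpen W) (h1 : (1 : H) ∈ W) :
    ∃ U : OpenNormalSubgroup H, (U : Set H) ⊆ W := by
  obtain ⟨V, hV, h1V, hVW⟩ := compact_exists_isClopen_in_isOpen hW h1
  obtain ⟨U, hU⟩ := IsTopologicalGroup.exist_openNormalSubgroup_sub_clopen_nhds_of_one hV h1V
  exact ⟨U, hU.trans hVW⟩

/-- The quotient of a profinite group by a closed subgroup is totally disconnected. -/
theorem AKL.quotient_totallyDisconnected {H : Type} [Group H] [TopologicalSpace H]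
    [IsTopologicalGroup H] [CompactSpace H] [T2Space H] [TotallyDisconnectedSpace H]
    (M : Subgroup H) (hMc : IsClosed (M : Set H)) :
    TotallyDisconnectedSpace (H ⧸ M) := by
  have key : ∀ a b : H ⧸ M, a ≠ b → ∃ C : Set (H ⧸ M), IsClopen C ∧ a ∈ C ∧ b ∉ C := by
    intro a b hab
    obtain ⟨h, rfl⟩ := QuotientGroup.mk_surjective a
    obtain ⟨h', rfl⟩ := QuotientGroup.mk_surjective b
    have hz : h⁻¹ * h' ∉ (M : Set H) := fun hm => hab (QuotientGroup.eq.mpr hm)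
    have hsub : (M : Set H) ⊆ ({h⁻¹ * h'} : Set H)ᶜ := by
      intro m hm hms
      rw [Set.mem_singleton_iff] at hms
      rw [hms] at hm; exact hz hm
    obtain ⟨V, hV1, hVM⟩ := compact_open_separated_mul_left hMc.isCompact
      isClosed_singleton.isOpen_compl hsub
    obtain ⟨V', hV'V, hV'o, hV'1⟩ := mem_nhds_iff.mp hV1
    obtain ⟨U₀, hU₀⟩ := AKL.exists_ons hV'o hV'1
    have hzUM : h⁻¹ * h' ∉ (U₀ : Set H) * (M : Set H) := by
      intro hmem
      have : h⁻¹ * h' ∈ V * (M : Set H) :=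
        Set.mul_subset_mul_right (hU₀.trans hV'V) hmem
      exact hVM this rfl
    set s : Set H := {h} * ((U₀ : Set H) * (M : Set H)) with hs
    have hUM_open : IsOpen ((U₀ : Set H) * (M : Set H)) := U₀.isOpen.mul_right
    have hUM_cpt : IsCompact ((U₀ : Set H) * (M : Set H)) :=
      (U₀.toOpenSubgroup.isClosed.isCompact).mul hMc.isCompact
    have hs_open : IsOpen s := by
      rw [hs, Set.singleton_mul]
      exact (Homeomorph.mulLeft h).isOpenMap _ hUM_open
    have hs_cpt : IsCompact s := by
      rw [hs, Set.singleton_mul]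
      exact hUM_cpt.image (continuous_mul_left h)
    have hsM : s * (M : Set H) = s := by
      rw [hs, mul_assoc, mul_assoc, coe_mul_coe]
    refine ⟨QuotientGroup.mk '' s, ⟨?_, ?_⟩, ?_, ?_⟩
    · rw [← (QuotientGroup.isQuotientMap_mk M).isClosed_preimage,
        QuotientGroup.preimage_image_mk_eq_mul, hsM]
      exact hs_cpt.isClosed
    · exact QuotientGroup.isOpenMap_coe _ hs_open
    · exact ⟨h, by
        rw [hs]
        exact ⟨h, rfl, 1, by simpa using ⟨1, U₀.one_mem, 1, M.one_mem, by simp⟩, by simp⟩, rfl⟩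
    · intro hb
      have : h' ∈ QuotientGroup.mk ⁻¹' (QuotientGroup.mk '' s : Set (H ⧸ M)) := hb
      rw [QuotientGroup.preimage_image_mk_eq_mul, hsM, hs, Set.singleton_mul] at this
      obtain ⟨y, hy, hyy⟩ := this
      apply hzUM
      have : h⁻¹ * h' = y := by rw [← hyy]; group
      rwa [this]
  have : TotallySeparatedSpace (H ⧸ M) := by
    constructor
    intro x _ y _ hxy
    obtain ⟨C, hC, hxC, hyC⟩ := key x y hxy
    exact ⟨C, Cᶜ, hC.isOpen, hC.compl.isOpen, hxC, hyC,
      (Set.union_compl_self C).symm.subset.trans (by simp), disjoint_compl_right⟩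
  exact TotallySeparatedSpace.totallyDisconnectedSpace (H ⧸ M)

open Classical in
/-- Piecewise combination over a clopen set is continuous. -/
theorem AKL.continuous_piecewise_clopen {X A : Type} [TopologicalSpace X] [TopologicalSpace A]
    {O : Set X} (hO : IsClopen O) {f g : X → A} (hf : ContinuousOn f O) (hg : Continuous g) :
    Continuous (fun y => if y ∈ O then f y else g y) := by
  rw [continuous_iff_continuousAt]
  intro x
  by_cases hx : x ∈ O
  · have hmem : O ∈ nhds x := hO.isOpen.mem_nhds hx
    rw [← continuousWithinAt_iff_continuousAt hmem]
    exact (hf x hx).congr (fun y hy => if_pos hy) (if_pos hx)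
  · have hmem : Oᶜ ∈ nhds x := hO.compl.isOpen.mem_nhds hx
    rw [← continuousWithinAt_iff_continuousAt hmem]
    exact (hg.continuousWithinAt).congr (fun y hy => if_neg hy) (if_neg hx)

/-- Glue local solutions over clopen pieces of a compact space. -/
theorem AKL.glue_clopen {X A : Type} [TopologicalSpace X] [CompactSpace X] [TopologicalSpace A]
    [Nonempty A] (P : X → A → Prop)
    (hloc : ∀ x : X, ∃ O : Set X, IsClopen O ∧ x ∈ O ∧
      ∃ f : X → A, ContinuousOn f O ∧ ∀ y ∈ O, P y (f y)) :
    ∃ f : X → A, Continuous f ∧ ∀ x, P x (f x) := by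
  classical
  choose O hO hxO f hf hP using hloc
  obtain ⟨t, ht⟩ := IsCompact.elim_finite_subcover isCompact_univ O (fun x => (hO x).isOpen)
    (fun x _ => Set.mem_iUnion.mpr ⟨x, hxO x⟩)
  have aux : ∀ s : Finset X, ∃ g : X → A, Continuous g ∧ ∀ y ∈ ⋃ i ∈ s, O i, P y (g y) := by
    intro s
    induction s using Finset.induction_on with
    | empty => exact ⟨fun _ => Classical.arbitrary A, continuous_const, by simp⟩
    | @insert a s ha ih =>
      obtain ⟨g, hg, hgP⟩ := ih
      refine ⟨fun y => if y ∈ O a then f a y else g y,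
        AKL.continuous_piecewise_clopen (hO a) (hf a) hg, ?_⟩
      intro y hy
      by_cases hya : y ∈ O a
      · simpa [hya] using hP a y hya
      · simp only [Set.mem_iUnion] at hy
        obtain ⟨i, hi, hyi⟩ := hy
        rcases Finset.mem_insert.mp hi with rfl | hi
        · exact absurd hyi hya
        · simpa [hya] using hgP y (Set.mem_iUnion₂.mpr ⟨i, hi, hyi⟩)
  obtain ⟨g, hg, hgP⟩ := aux t
  exact ⟨g, hg, fun x => hgP x (ht (Set.mem_univ x))⟩

/-- Continuous lifting of a continuous map along a continuous surjective homomorphism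
with finite kernel, from a profinite group. -/
theorem AKL.exists_continuous_lift {A B : Type} [Group A] [TopologicalSpace A]
    [IsTopologicalGroup A] [CompactSpace A] [T2Space A] [TotallyDisconnectedSpace A]
    [Group B] [TopologicalSpace B] [IsTopologicalGroup B] [T2Space B]
    (p : A →* B) (hp : Continuous p) (hsurj : Function.Surjective p) (hker : Finite p.ker)
    {X : Type} [TopologicalSpace X] [CompactSpace X]
    (c : X → B) (hc : Continuous c) :
    ∃ d : X → A, Continuous d ∧ ∀ x, p (d x) = c x := by
  classical
  have hfinset : ((p.ker : Set A) \ {1}).Finite := (Set.toFinite _).diff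
  have hWopen : IsOpen ((p.ker : Set A) \ {1})ᶜ := (hfinset.isClosed).isOpen_compl
  have h1W : (1 : A) ∈ ((p.ker : Set A) \ {1})ᶜ := fun h => h.2 rfl
  obtain ⟨V, hV⟩ := AKL.exists_ons hWopen h1W
  have hVker : ∀ v : A, v ∈ V → v ∈ p.ker → v = 1 := by
    intro v hv hvk
    by_contra hne
    exact hV hv ⟨hvk, hne⟩
  set W : Subgroup B := Subgroup.map p V.toSubgroup with hW
  have hWclosed : IsClosed (W : Set B) := by
    have : IsCompact ((V : Set A)) := V.toOpenSubgroup.isClosed.isCompact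
    have : IsCompact (W : Set B) := by
      rw [hW]; exact (this.image hp)
    exact this.isClosed
  have hfinq : Finite (A ⧸ V.toSubgroup) := Subgroup.quotient_finite_of_isOpen _ V.isOpen
  have hsurjq : Function.Surjective
      (Quotient.map' p (fun a b hab => by
        rw [QuotientGroup.leftRel_apply] at *
        rw [← map_inv, ← map_mul]
        exact ⟨a⁻¹ * b, hab, rfl⟩) : A ⧸ V.toSubgroup → B ⧸ W) := by
    intro y
    obtain ⟨b, rfl⟩ := QuotientGroup.mk_surjective y
    obtain ⟨a, rfl⟩ := hsurj b
    exact ⟨QuotientGroup.mk a, rfl⟩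
  have hfinW : Finite (B ⧸ W) := Finite.of_surjective _ hsurjq
  haveI := hfinW
  haveI : W.FiniteIndex := Subgroup.finiteIndex_of_finite_quotient (H := W)
  have hWopen' : IsOpen (W : Set B) := Subgroup.isOpen_of_isClosed_of_finiteIndex W hWclosed
  have hWclopen : IsClopen (W : Set B) := ⟨hWclosed, hWopen'⟩
  have hVcompact : CompactSpace ↥(V : Set A) :=
    isCompact_iff_compactSpace.mp V.toOpenSubgroup.isClosed.isCompact
  let pV : ↥(V : Set A) → ↥(W : Set B) := fun v => ⟨p v.1, ⟨v.1, v.2, rfl⟩⟩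
  have hpVcont : Continuous pV := Continuous.subtype_mk (hp.comp continuous_subtype_val) _
  have hpVbij : Function.Bijective pV := by
    constructor
    · rintro ⟨v, hv⟩ ⟨v', hv'⟩ hvv
      have : p v = p v' := congrArg Subtype.val hvv
      have hk : v⁻¹ * v' ∈ p.ker := by
        rw [MonoidHom.mem_ker, map_mul, map_inv, this]; group
      have := hVker _ (mul_mem (inv_mem hv) hv') hk
      ext
      rw [← mul_left_cancel_iff (a := v⁻¹)]
      rw [this]; group
    · rintro ⟨w, hw⟩
      obtain ⟨v, hv, rfl⟩ := hw
      exact ⟨⟨v, hv⟩, rfl⟩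
  let e : ↥(V : Set A) ≃ₜ ↥(W : Set B) :=
    @Continuous.homeoOfEquivCompactToT2 _ _ _ _ hVcompact _ (Equiv.ofBijective pV hpVbij) hpVcont
  have he : ∀ w : ↥(W : Set B), p ((e.symm w : A)) = (w : B) := by
    intro w
    have : pV (e.symm w) = w := e.apply_symm_apply w
    exact congrArg Subtype.val this
  have : Nonempty A := ⟨1⟩
  apply AKL.glue_clopen (P := fun x a => p a = c x)
  intro x₀
  obtain ⟨a₀, ha₀⟩ := hsurj (c x₀)
  set O : Set X := {y | (c x₀)⁻¹ * c y ∈ W} with hO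
  have hOclopen : IsClopen O :=
    hWclopen.preimage (continuous_const.mul hc)
  have hx₀O : x₀ ∈ O := by
    show (c x₀)⁻¹ * c x₀ ∈ W
    rw [inv_mul_cancel]
    exact W.one_mem
  refine ⟨O, hOclopen, hx₀O, fun y => if hy : (c x₀)⁻¹ * c y ∈ W then
    a₀ * (e.symm ⟨(c x₀)⁻¹ * c y, hy⟩ : A) else 1, ?_, ?_⟩
  · rw [continuousOn_iff_continuous_restrict]
    have : O.domRestrict (fun y => if hy : (c x₀)⁻¹ * c y ∈ W then
        a₀ * (e.symm ⟨(c x₀)⁻¹ * c y, hy⟩ : A) else 1)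
        = fun (y : O) => a₀ * (e.symm ⟨(c x₀)⁻¹ * c y, y.2⟩ : A) := by
      funext y
      simp only [Set.domRestrict_apply]
      have hy2 : (c x₀)⁻¹ * c ↑y ∈ W := y.2
      rw [dif_pos hy2]
    rw [this]
    apply Continuous.mul continuous_const
    apply continuous_subtype_val.comp
    apply e.symm.continuous.comp
    apply Continuous.subtype_mk
    exact (continuous_const.mul (hc.comp continuous_subtype_val))
  · intro y hy
    have hy' : (c x₀)⁻¹ * c y ∈ W := hy
    show p (if hyy : (c x₀)⁻¹ * c y ∈ W then _ else 1) = c y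
    rw [dif_pos hy', map_mul, he ⟨_, hy'⟩, ha₀]
    group

/-- The canonical map between quotients by nested subgroups. -/
def AKL.qmap {H : Type} [Group H] {N N' : Subgroup H} (hNN' : N ≤ N') : H ⧸ N → H ⧸ N' :=
  Quotient.map' id fun a b hab =>
    QuotientGroup.leftRel_apply.mpr (hNN' (QuotientGroup.leftRel_apply.mp hab))

theorem AKL.qmap_mk {H : Type} [Group H] {N N' : Subgroup H} (hNN' : N ≤ N') (h : H) :
    AKL.qmap hNN' (QuotientGroup.mk h) = QuotientGroup.mk h := rfl

theorem AKL.qmap_cont {H : Type} [Group H] [TopologicalSpace H] {N N' : Subgroup H}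
    (hNN' : N ≤ N') : Continuous (AKL.qmap hNN') := by
  rw [(QuotientGroup.isQuotientMap_mk N).continuous_iff]
  show Continuous fun h : H => AKL.qmap hNN' (QuotientGroup.mk h)
  simp only [AKL.qmap_mk]
  exact QuotientGroup.continuous_mk

end TopAux

/-! ### Partial solutions -/

/-- A partial solution of the lifting problem: a solution modulo a closed normal
subgroup `N` of the kernel. -/
structure PSol (G X H Q : Type) [Group G] [TopologicalSpace G] [TopologicalSpace X]
    [Group H] [TopologicalSpace H] [Group Q] [TopologicalSpace Q]
    (S : X → Subgroup G) (α : H →* Q) (φ : G →* Q) (σ : SheafSpace S → H) where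
  N : Subgroup H
  normal : N.Normal
  closed : IsClosed (N : Set H)
  leker : N ≤ α.ker
  ψ : G → H ⧸ N
  c : X → H ⧸ N
  contψ : Continuous ψ
  contc : Continuous c
  hom : ∀ g g' h h', QuotientGroup.mk h = ψ g → QuotientGroup.mk h' = ψ g' →
    QuotientGroup.mk (h * h') = ψ (g * g')
  liftφ : ∀ g h, QuotientGroup.mk h = ψ g → α h = φ g
  ckera : ∀ x h, QuotientGroup.mk h = c x → h ∈ α.ker
  conj : ∀ (x : X) (s : G) (hs : s ∈ S x) (h hc : H), QuotientGroup.mk h = ψ s →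
    QuotientGroup.mk hc = c x →
    QuotientGroup.mk (hc * h * hc⁻¹) = (QuotientGroup.mk (σ ⟨(s, x), hs⟩) : H ⧸ N)

namespace PSol

variable {G X H Q : Type} [Group G] [TopologicalSpace G] [TopologicalSpace X]
    [Group H] [TopologicalSpace H] [Group Q] [TopologicalSpace Q]
    {S : X → Subgroup G} {α : H →* Q} {φ : G →* Q} {σ : SheafSpace S → H}

instance : Preorder (PSol G X H Q S α φ σ) where
  le a b := b.N ≤ a.N ∧ (∀ g h, QuotientGroup.mk h = b.ψ g → QuotientGroup.mk h = a.ψ g) ∧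
    (∀ x h, QuotientGroup.mk h = b.c x → QuotientGroup.mk h = a.c x)
  le_refl a := ⟨le_rfl, fun _ _ h => h, fun _ _ h => h⟩
  le_trans a b c hab hbc :=
    ⟨hbc.1.trans hab.1, fun g h hh => hab.2.1 g h (hbc.2.1 g h hh),
      fun x h hh => hab.2.2 x h (hbc.2.2 x h hh)⟩

end PSol

namespace PSol

variable {G X H Q : Type} [Group G] [TopologicalSpace G] [TopologicalSpace X]
    [Group H] [TopologicalSpace H] [Group Q] [TopologicalSpace Q]
    {S : X → Subgroup G} {α : H →* Q} {φ : G →* Q} {σ : SheafSpace S → H}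

theorem exists_ub [IsTopologicalGroup H] [CompactSpace H] [T2Space H]
    (cset : Set (PSol G X H Q S α φ σ)) (hchain : IsChain (· ≤ ·) cset)
    (hne : cset.Nonempty) : BddAbove cset := by
  classical
  haveI : Nonempty ↥cset := hne.to_subtype
  set Nc : Subgroup H := sInf (PSol.N '' cset) with hNc
  have hleN : ∀ a ∈ cset, Nc ≤ a.N := fun a ha => sInf_le ⟨a, ha, rfl⟩
  have hmemN : ∀ z : H, z ∈ Nc ↔ ∀ a ∈ cset, z ∈ a.N := by
    intro z
    rw [hNc, Subgroup.mem_sInf]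
    constructor
    · intro hz a ha; exact hz _ ⟨a, ha, rfl⟩
    · rintro hz p ⟨a, ha, rfl⟩; exact hz a ha
  have hnormal : Nc.Normal := by
    constructor
    intro n hn g
    rw [hmemN] at hn ⊢
    intro a ha
    exact a.normal.conj_mem n (hn a ha) g
  have hclosed : IsClosed (Nc : Set H) := by
    have : (Nc : Set H) = ⋂ a ∈ cset, (a.N : Set H) := by
      rw [hNc, Subgroup.coe_sInf]
      ext z
      simp only [Set.mem_iInter]
      constructor
      · intro hz a ha; exact hz _ ⟨a, ha, rfl⟩
      · rintro hz p ⟨a, ha, rfl⟩; exact hz a ha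
    rw [this]
    exact isClosed_biInter fun a ha => a.closed
  -- transfer lemmas
  have keyup : ∀ a ∈ cset, ∀ h h' : H, (QuotientGroup.mk h : H ⧸ Nc) = QuotientGroup.mk h' →
      (QuotientGroup.mk h : H ⧸ a.N) = QuotientGroup.mk h' := by
    intro a ha h h' he
    exact QuotientGroup.eq.mpr (hleN a ha (QuotientGroup.eq.mp he))
  have keydown : ∀ h h' : H, (∀ a ∈ cset, (QuotientGroup.mk h : H ⧸ a.N) = QuotientGroup.mk h')
      → (QuotientGroup.mk h : H ⧸ Nc) = QuotientGroup.mk h' := by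
    intro h h' he
    refine QuotientGroup.eq.mpr ((hmemN _).mpr fun a ha => QuotientGroup.eq.mp (he a ha))
  -- simultaneous representatives by compactness
  have hFIP : ∀ (w : (a : PSol G X H Q S α φ σ) → H ⧸ a.N),
      (∀ a ∈ cset, ∀ b ∈ cset, a ≤ b → ∀ h : H, QuotientGroup.mk h = w b →
        QuotientGroup.mk h = w a) →
      ∃ h : H, ∀ a ∈ cset, QuotientGroup.mk h = w a := by
    intro w hcompat
    set K : ↥cset → Set H := fun a => (QuotientGroup.mk (s := a.1.N)) ⁻¹' {w a.1} with hK
    have hKne : ∀ a : ↥cset, (K a).Nonempty := by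
      intro a
      obtain ⟨h, hh⟩ := QuotientGroup.mk_surjective (w a.1)
      exact ⟨h, hh⟩
    have hKcl : ∀ a : ↥cset, IsClosed (K a) := by
      intro a
      haveI := a.1.normal
      haveI : IsClosed (a.1.N : Set H) := a.1.closed
      exact (isClosed_singleton).preimage QuotientGroup.continuous_mk
    have hKcpt : ∀ a : ↥cset, IsCompact (K a) := fun a => (hKcl a).isCompact
    have hKdir : Directed (· ⊇ ·) K := by
      intro a b
      rcases eq_or_ne a.1 b.1 with he | hne
      · refine ⟨a, subset_rfl, ?_⟩
        rw [hK]
        intro z hz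
        show QuotientGroup.mk z = w b.1
        rw [← he]
        exact hz
      · rcases hchain a.2 b.2 hne with hab | hba
        · refine ⟨b, ?_, subset_rfl⟩
          intro z hz
          exact hcompat a.1 a.2 b.1 b.2 hab z hz
        · refine ⟨a, subset_rfl, ?_⟩
          intro z hz
          exact hcompat b.1 b.2 a.1 a.2 hba z hz
    obtain ⟨h, hh⟩ := IsCompact.nonempty_iInter_of_directed_nonempty_isCompact_isClosed
      K hKdir hKne hKcpt hKcl
    refine ⟨h, fun a ha => ?_⟩
    have := Set.mem_iInter.mp hh ⟨a, ha⟩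
    exact this
  have hcompatψ : ∀ g : G, ∀ a ∈ cset, ∀ b ∈ cset, a ≤ b → ∀ h : H,
      QuotientGroup.mk h = b.ψ g → QuotientGroup.mk h = a.ψ g :=
    fun g a _ b _ hab h hh => hab.2.1 g h hh
  have hcompatc : ∀ x : X, ∀ a ∈ cset, ∀ b ∈ cset, a ≤ b → ∀ h : H,
      QuotientGroup.mk h = b.c x → QuotientGroup.mk h = a.c x :=
    fun x a _ b _ hab h hh => hab.2.2 x h hh
  have hFψ : ∀ g : G, ∃ h : H, ∀ a ∈ cset, QuotientGroup.mk h = a.ψ g :=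
    fun g => hFIP (fun a => a.ψ g) (hcompatψ g)
  have hFc : ∀ x : X, ∃ h : H, ∀ a ∈ cset, QuotientGroup.mk h = a.c x :=
    fun x => hFIP (fun a => a.c x) (hcompatc x)
  choose Fψ hFψ' using hFψ
  choose Fc hFc' using hFc
  obtain ⟨a₀, ha₀⟩ := hne
  -- continuity via closed graphs
  have contψb : Continuous (fun g => (QuotientGroup.mk (Fψ g) : H ⧸ Nc)) := by
    apply AKL.continuous_of_isClosed_graph
    have : {p : G × H ⧸ Nc | p.2 = QuotientGroup.mk (Fψ p.1)}
        = ⋂ a : ↥cset, {p : G × H ⧸ Nc | AKL.qmap (hleN a.1 a.2) p.2 = a.1.ψ p.1} := by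
      ext ⟨g, y⟩
      simp only [Set.mem_setOf_eq, Set.mem_iInter]
      constructor
      · rintro rfl a
        rw [AKL.qmap_mk]
        exact hFψ' g a.1 a.2
      · intro hy
        obtain ⟨h, rfl⟩ := QuotientGroup.mk_surjective y
        apply keydown
        intro a ha
        have := hy ⟨a, ha⟩
        rw [AKL.qmap_mk] at this
        rw [this]
        exact (hFψ' g a ha).symm
    rw [this]
    apply isClosed_iInter
    intro a
    haveI := a.1.normal
    haveI : IsClosed (a.1.N : Set H) := a.1.closed
    exact isClosed_eq ((AKL.qmap_cont _).comp continuous_snd) (a.1.contψ.comp continuous_fst)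
  have contcb : Continuous (fun x => (QuotientGroup.mk (Fc x) : H ⧸ Nc)) := by
    apply AKL.continuous_of_isClosed_graph
    have : {p : X × H ⧸ Nc | p.2 = QuotientGroup.mk (Fc p.1)}
        = ⋂ a : ↥cset, {p : X × H ⧸ Nc | AKL.qmap (hleN a.1 a.2) p.2 = a.1.c p.1} := by
      ext ⟨x, y⟩
      simp only [Set.mem_setOf_eq, Set.mem_iInter]
      constructor
      · rintro rfl a
        rw [AKL.qmap_mk]
        exact hFc' x a.1 a.2
      · intro hy
        obtain ⟨h, rfl⟩ := QuotientGroup.mk_surjective y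
        apply keydown
        intro a ha
        have := hy ⟨a, ha⟩
        rw [AKL.qmap_mk] at this
        rw [this]
        exact (hFc' x a ha).symm
    rw [this]
    apply isClosed_iInter
    intro a
    haveI := a.1.normal
    haveI : IsClosed (a.1.N : Set H) := a.1.closed
    exact isClosed_eq ((AKL.qmap_cont _).comp continuous_snd) (a.1.contc.comp continuous_fst)
  -- the transfer of Nc-level equalities to a-level
  have toa : ∀ a ∈ cset, ∀ (h : H) (g : G),
      (QuotientGroup.mk h : H ⧸ Nc) = QuotientGroup.mk (Fψ g) →
      (QuotientGroup.mk h : H ⧸ a.N) = a.ψ g := by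
    intro a ha h g he
    rw [keyup a ha h (Fψ g) he]
    exact hFψ' g a ha
  have toac : ∀ a ∈ cset, ∀ (h : H) (x : X),
      (QuotientGroup.mk h : H ⧸ Nc) = QuotientGroup.mk (Fc x) →
      (QuotientGroup.mk h : H ⧸ a.N) = a.c x := by
    intro a ha h x he
    rw [keyup a ha h (Fc x) he]
    exact hFc' x a ha
  have homb : ∀ g g' h h', (QuotientGroup.mk h : H ⧸ Nc) = QuotientGroup.mk (Fψ g) →
      (QuotientGroup.mk h' : H ⧸ Nc) = QuotientGroup.mk (Fψ g') →
      (QuotientGroup.mk (h * h') : H ⧸ Nc) = QuotientGroup.mk (Fψ (g * g')) := by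
    intro g g' h h' hh hh'
    apply keydown
    intro a ha
    have h1 := toa a ha h g hh
    have h2 := toa a ha h' g' hh'
    rw [a.hom g g' h h' h1 h2]
    exact (hFψ' (g * g') a ha).symm
  have liftb : ∀ g h, (QuotientGroup.mk h : H ⧸ Nc) = QuotientGroup.mk (Fψ g) → α h = φ g :=
    fun g h hh => a₀.liftφ g h (toa a₀ ha₀ h g hh)
  have ckerb : ∀ x h, (QuotientGroup.mk h : H ⧸ Nc) = QuotientGroup.mk (Fc x) → h ∈ α.ker :=
    fun x h hh => a₀.ckera x h (toac a₀ ha₀ h x hh)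
  have conjb : ∀ (x : X) (s : G) (hs : s ∈ S x) (h hc : H),
      (QuotientGroup.mk h : H ⧸ Nc) = QuotientGroup.mk (Fψ s) →
      (QuotientGroup.mk hc : H ⧸ Nc) = QuotientGroup.mk (Fc x) →
      (QuotientGroup.mk (hc * h * hc⁻¹) : H ⧸ Nc) = QuotientGroup.mk (σ ⟨(s, x), hs⟩) := by
    intro x s hs h hc hh hhc
    apply keydown
    intro a ha
    exact a.conj x s hs h hc (toa a ha h s hh) (toac a ha hc x hhc)
  refine ⟨PSol.mk Nc hnormal hclosed ((hleN a₀ ha₀).trans a₀.leker)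
    (fun g => QuotientGroup.mk (Fψ g)) (fun x => QuotientGroup.mk (Fc x))
    contψb contcb homb liftb ckerb conjb, ?_⟩
  intro a ha
  exact ⟨hleN a ha, fun g h hh => toa a ha h g hh, fun x h hh => toac a ha h x hh⟩

end PSol


/-- Let `(G,𝒮)` be a profinite group pair. If every lifting problem of `G`
relative to `𝒮` with finite kernel has a solution, then every lifting problem of `G`
relative to `𝒮` (with arbitrary closed kernel) has a solution. -/
theorem arbitrary_kernel_lifting
    (G : Type) [Group G] [TopologicalSpace G] [IsTopologicalGroup G]
    [CompactSpace G] [T2Space G] [TotallyDisconnectedSpace G]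
    (X : Type) [TopologicalSpace X] [CompactSpace X] [T2Space X]
    [TotallyDisconnectedSpace X]
    (S : X → Subgroup G) (hclosed : ∀ x, IsClosed (S x : Set G))
    (hidx : IsClosed {gx : G × X | gx.1 ∈ S gx.2})
    (hfin : ∀ (H Q : Type) [Group H] [TopologicalSpace H] [IsTopologicalGroup H]
        [CompactSpace H] [T2Space H] [TotallyDisconnectedSpace H]
        [Group Q] [TopologicalSpace Q] [IsTopologicalGroup Q]
        [CompactSpace Q] [T2Space Q] [TotallyDisconnectedSpace Q]
        (α : H →* Q) (φ : G →* Q) (σ : SheafSpace S → H),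
        IsLiftingProblem S α φ σ → Finite α.ker →
        HasSolution S α φ σ) :
    ∀ (H Q : Type) [Group H] [TopologicalSpace H] [IsTopologicalGroup H]
        [CompactSpace H] [T2Space H] [TotallyDisconnectedSpace H]
        [Group Q] [TopologicalSpace Q] [IsTopologicalGroup Q]
        [CompactSpace Q] [T2Space Q] [TotallyDisconnectedSpace Q]
        (α : H →* Q) (φ : G →* Q) (σ : SheafSpace S → H),
      IsLiftingProblem S α φ σ → HasSolution S α φ σ := by
  intro H Q _ _ _ _ _ _ _ _ _ _ _ _ α φ σ hlift
  obtain ⟨hαc, hαs, hφc, hσc, hσm, hσl⟩ := hlift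
  classical
  -- the base partial solution, modulo the whole kernel
  have kerclosed : IsClosed (α.ker : Set H) := by
    have : (α.ker : Set H) = α ⁻¹' {1} := by
      ext h; simp [MonoidHom.mem_ker]
    rw [this]
    exact isClosed_singleton.preimage hαc
  set e := QuotientGroup.quotientKerEquivOfSurjective α hαs with hedef
  have he : ∀ h : H, e (QuotientGroup.mk h) = α h := fun h => QuotientGroup.kerLift_mk α h
  have hecont : Continuous e := by
    rw [(QuotientGroup.isQuotientMap_mk α.ker).continuous_iff]
    have : (⇑e ∘ QuotientGroup.mk : H → Q) = ⇑α := funext he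
    rw [this]
    exact hαc
  have hesymm : Continuous e.symm := by
    let eh : (H ⧸ α.ker) ≃ₜ Q := Continuous.homeoOfEquivCompactToT2 (f := e.toEquiv) hecont
    exact eh.symm.continuous
  have base : PSol G X H Q S α φ σ := by
    refine PSol.mk α.ker inferInstance kerclosed le_rfl
      (fun g => e.symm (φ g)) (fun _ => (1 : H ⧸ α.ker))
      (hesymm.comp hφc) continuous_const ?_ ?_ ?_ ?_
    · intro g g' h h' hh hh'
      rw [QuotientGroup.mk_mul, hh, hh']
      show e.symm (φ g) * e.symm (φ g') = e.symm (φ (g * g'))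
      rw [map_mul, map_mul]
    · intro g h hh
      rw [← he h, hh, MulEquiv.apply_symm_apply]
    · intro x h hh
      exact (QuotientGroup.eq_one_iff h).mp hh
    · intro x s hs h hc hh hhc
      rw [QuotientGroup.mk_mul, QuotientGroup.mk_mul, QuotientGroup.mk_inv, hh, hhc]
      have : (QuotientGroup.mk (σ ⟨(s, x), hs⟩) : H ⧸ α.ker) = e.symm (φ s) := by
        rw [MulEquiv.eq_symm_apply, he]
        exact hσl x s hs
      rw [this]
      group
  haveI : Nonempty (PSol G X H Q S α φ σ) := ⟨base⟩
  -- Zorn's lemma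
  obtain ⟨m, hmax⟩ := zorn_le_nonempty (α := PSol G X H Q S α φ σ)
    (fun cset hchain hne => PSol.exists_ub cset hchain hne)
  -- the maximal partial solution has trivial N
  have hstep : ∀ U : OpenNormalSubgroup H, m.N ≤ U.toSubgroup := by
    intro U
    haveI hNn : m.N.Normal := m.normal
    set M : Subgroup H := m.N ⊓ U.toSubgroup with hMdef
    haveI hMn : M.Normal :=
      ⟨fun n hn g => ⟨m.normal.conj_mem n hn.1 g, U.isNormal'.conj_mem n hn.2 g⟩⟩
    have hMc : IsClosed (M : Set H) := by
      rw [hMdef, Subgroup.coe_inf]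
      exact m.closed.inter U.toOpenSubgroup.isClosed
    have hMN : M ≤ m.N := inf_le_left
    -- instances on the two quotients
    haveI : IsClosed (m.N : Set H) := m.closed
    haveI : IsClosed (M : Set H) := hMc
    haveI : TotallyDisconnectedSpace (H ⧸ m.N) := AKL.quotient_totallyDisconnected m.N m.closed
    haveI : TotallyDisconnectedSpace (H ⧸ M) := AKL.quotient_totallyDisconnected M hMc
    -- the connecting homomorphism
    set p : H ⧸ M →* H ⧸ m.N :=
      QuotientGroup.map M m.N (MonoidHom.id H) (fun z hz => hz.1) with hpdef
    have hpmk : ∀ h : H, p (QuotientGroup.mk h) = QuotientGroup.mk h := by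
      intro h
      rw [hpdef]; rfl
    have hpc : Continuous p := by
      rw [(QuotientGroup.isQuotientMap_mk M).continuous_iff]
      have : (⇑p ∘ QuotientGroup.mk : H → H ⧸ m.N) = QuotientGroup.mk := funext hpmk
      rw [this]
      exact QuotientGroup.continuous_mk
    have hpsurj : Function.Surjective p := by
      intro y
      obtain ⟨h, rfl⟩ := QuotientGroup.mk_surjective y
      exact ⟨QuotientGroup.mk h, hpmk h⟩
    have hpker : Finite p.ker := by
      have hinj : Function.Injective
          (fun y : p.ker => AKL.qmap (inf_le_right : M ≤ U.toSubgroup) y.1) := by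
        rintro ⟨y, hy⟩ ⟨y', hy'⟩ hyy
        obtain ⟨h, rfl⟩ := QuotientGroup.mk_surjective y
        obtain ⟨h', rfl⟩ := QuotientGroup.mk_surjective y'
        simp only [AKL.qmap_mk] at hyy
        have h1 : h ∈ m.N := by
          have := hy
          rw [MonoidHom.mem_ker, hpmk] at this
          exact (QuotientGroup.eq_one_iff h).mp this
        have h1' : h' ∈ m.N := by
          have := hy'
          rw [MonoidHom.mem_ker, hpmk] at this
          exact (QuotientGroup.eq_one_iff h').mp this
        have h2 : h⁻¹ * h' ∈ U.toSubgroup := QuotientGroup.eq.mp hyy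
        have : h⁻¹ * h' ∈ M := Subgroup.mem_inf.mpr ⟨mul_mem (inv_mem h1) h1', h2⟩
        exact Subtype.ext (QuotientGroup.eq.mpr this)
      haveI : Finite (H ⧸ U.toSubgroup) :=
        Subgroup.quotient_finite_of_isOpen _ U.isOpen
      exact Finite.of_injective _ hinj
    -- bundle m.ψ as a homomorphism
    have hψmul : ∀ g g' : G, m.ψ (g * g') = m.ψ g * m.ψ g' := by
      intro g g'
      obtain ⟨h, hh⟩ := QuotientGroup.mk_surjective (m.ψ g)
      obtain ⟨h', hh'⟩ := QuotientGroup.mk_surjective (m.ψ g')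
      rw [← m.hom g g' h h' hh hh', QuotientGroup.mk_mul, hh, hh']
    set ψN : G →* H ⧸ m.N := MonoidHom.mk' m.ψ hψmul with hψNdef
    -- continuous lift of m.c along p
    obtain ⟨d, hdc, hd⟩ := AKL.exists_continuous_lift p hpc hpsurj hpker m.c m.contc
    -- the conjugated local data
    set σ' : SheafSpace S → H ⧸ M :=
      fun sx => (d sx.1.2)⁻¹ * (QuotientGroup.mk (σ sx) : H ⧸ M) * d sx.1.2 with hσ'def
    have hψσ : ∀ (x : X) (s : G) (hs : s ∈ S x),
        (m.c x)⁻¹ * (QuotientGroup.mk (σ ⟨(s, x), hs⟩) : H ⧸ m.N) * m.c x = m.ψ s := by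
      intro x s hs
      obtain ⟨h, hh⟩ := QuotientGroup.mk_surjective (m.ψ s)
      obtain ⟨hc, hhc⟩ := QuotientGroup.mk_surjective (m.c x)
      have := m.conj x s hs h hc hh hhc
      rw [QuotientGroup.mk_mul, QuotientGroup.mk_mul, QuotientGroup.mk_inv, hh, hhc] at this
      rw [← this]
      group
    have hprob : IsLiftingProblem S p ψN σ' := by
      refine ⟨hpc, hpsurj, ?_, ?_, ?_, ?_⟩
      · exact m.contψ
      · have hproj : Continuous (fun sx : SheafSpace S => sx.1.2) :=
          continuous_snd.comp continuous_subtype_val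
        rw [hσ'def]
        exact ((hdc.comp hproj).inv.mul
          (QuotientGroup.continuous_mk.comp hσc)).mul (hdc.comp hproj)
      · intro x s s' hs hs'
        rw [hσ'def]
        simp only
        rw [hσm x s s' hs hs', QuotientGroup.mk_mul]
        group
      · intro x s hs
        rw [hσ'def]
        simp only
        rw [map_mul, map_mul, map_inv, hd, hpmk]
        show (m.c x)⁻¹ * (QuotientGroup.mk (σ ⟨(s, x), hs⟩) : H ⧸ m.N) * m.c x = ψN s
        rw [hψσ x s hs]
        rfl
    obtain ⟨ψ', c', hψ'c, hψ'lift, hc'c, hc'ker, hconj'⟩ :=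
      hfin (H ⧸ M) (H ⧸ m.N) p ψN σ' hprob hpker
    -- assemble the improved partial solution
    have liftb : ∀ g h, (QuotientGroup.mk h : H ⧸ M) = ψ' g → α h = φ g := by
      intro g h hh
      apply m.liftφ g h
      have := congrArg p hh
      rw [hpmk, hψ'lift] at this
      exact this
    have hcNb : ∀ x h, (QuotientGroup.mk h : H ⧸ M) = d x * c' x →
        (QuotientGroup.mk h : H ⧸ m.N) = m.c x := by
      intro x h hh
      have := congrArg p hh
      rw [hpmk, map_mul, hd] at this
      have hker1 : p (c' x) = 1 := hc'ker x
      rw [hker1, mul_one] at this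
      exact this
    have ckerb : ∀ x h, (QuotientGroup.mk h : H ⧸ M) = d x * c' x → h ∈ α.ker := by
      intro x h hh
      exact m.ckera x h (hcNb x h hh)
    have homb : ∀ g g' h h', (QuotientGroup.mk h : H ⧸ M) = ψ' g →
        (QuotientGroup.mk h' : H ⧸ M) = ψ' g' →
        (QuotientGroup.mk (h * h') : H ⧸ M) = ψ' (g * g') := by
      intro g g' h h' hh hh'
      rw [QuotientGroup.mk_mul, hh, hh', ← map_mul]
    have conjb : ∀ (x : X) (s : G) (hs : s ∈ S x) (h hc : H),
        (QuotientGroup.mk h : H ⧸ M) = ψ' s →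
        (QuotientGroup.mk hc : H ⧸ M) = d x * c' x →
        (QuotientGroup.mk (hc * h * hc⁻¹) : H ⧸ M) = QuotientGroup.mk (σ ⟨(s, x), hs⟩) := by
      intro x s hs h hc hh hhc
      rw [QuotientGroup.mk_mul, QuotientGroup.mk_mul, QuotientGroup.mk_inv, hh, hhc]
      have h1 := hconj' x s hs
      rw [hσ'def] at h1
      simp only at h1
      have h2 : ψ' s = (c' x)⁻¹ * ((d x)⁻¹ * (QuotientGroup.mk (σ ⟨(s, x), hs⟩) : H ⧸ M)
          * d x) * c' x := by
        rw [← h1]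
        group
      rw [h2]
      group
    set b : PSol G X H Q S α φ σ := PSol.mk M hMn hMc (hMN.trans m.leker)
      (⇑ψ') (fun x => d x * c' x) hψ'c (hdc.mul hc'c) homb liftb ckerb conjb with hbdef
    have hmb : m ≤ b := by
      refine ⟨hMN, ?_, ?_⟩
      · intro g h hh
        have := congrArg p hh
        rw [hpmk, hψ'lift] at this
        exact this
      · intro x h hh
        exact hcNb x h hh
    have hbm := hmax hmb
    exact hbm.1.trans inf_le_right
  -- the maximal N is trivial
  have hbot : ∀ h ∈ m.N, h = (1 : H) := by
    intro h hh
    by_contra hne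
    have h1 : (1 : H) ∈ ({h} : Set H)ᶜ := by
      simp only [Set.mem_compl_iff, Set.mem_singleton_iff]
      exact fun hcon => hne hcon.symm
    obtain ⟨U, hU⟩ := AKL.exists_ons isClosed_singleton.isOpen_compl h1
    exact (hU (hstep U hh)) rfl
  -- extract the genuine solution
  haveI : m.N.Normal := m.normal
  haveI : IsClosed (m.N : Set H) := m.closed
  have hinj : Function.Injective (QuotientGroup.mk : H → H ⧸ m.N) := by
    intro h h' he'
    exact inv_mul_eq_one.mp (hbot _ (QuotientGroup.eq.mp he'))
  set eqv : H ≃ (H ⧸ m.N) :=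
    Equiv.ofBijective _ ⟨hinj, QuotientGroup.mk_surjective⟩ with heqv
  let eh : H ≃ₜ (H ⧸ m.N) :=
    Continuous.homeoOfEquivCompactToT2 (f := eqv) QuotientGroup.continuous_mk
  have hehmk : ∀ y : H ⧸ m.N, (QuotientGroup.mk (eh.symm y) : H ⧸ m.N) = y :=
    fun y => eqv.apply_symm_apply y
  have hψmul2 : ∀ g g' : G, m.ψ (g * g') = m.ψ g * m.ψ g' := by
    intro g g'
    obtain ⟨h, hh⟩ := QuotientGroup.mk_surjective (m.ψ g)
    obtain ⟨h', hh'⟩ := QuotientGroup.mk_surjective (m.ψ g')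
    rw [← m.hom g g' h h' hh hh', QuotientGroup.mk_mul, hh, hh']
  have hmul : ∀ g g' : G, (fun g => eh.symm (m.ψ g)) (g * g')
      = (fun g => eh.symm (m.ψ g)) g * (fun g => eh.symm (m.ψ g)) g' := by
    intro g g'
    apply hinj
    show (QuotientGroup.mk (eh.symm (m.ψ (g * g'))) : H ⧸ m.N) = _
    rw [hehmk, QuotientGroup.mk_mul, hehmk, hehmk]
    exact hψmul2 g g'
  refine ⟨MonoidHom.mk' (fun g => eh.symm (m.ψ g)) hmul, fun x => eh.symm (m.c x),
    ?_, ?_, ?_, ?_, ?_⟩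
  · exact eh.symm.continuous.comp m.contψ
  · intro g
    exact m.liftφ g _ (hehmk _)
  · exact eh.symm.continuous.comp m.contc
  · intro x
    exact m.ckera x _ (hehmk _)
  · intro x s hs
    apply hinj
    show (QuotientGroup.mk (eh.symm (m.c x) * eh.symm (m.ψ s) * (eh.symm (m.c x))⁻¹)
      : H ⧸ m.N) = QuotientGroup.mk (σ ⟨(s, x), hs⟩)
    exact m.conj x s hs _ _ (hehmk _) (hehmk _)
end

section
/- Let (G,𝒮) be a profinite group pair and consider a lifting problem of G relative to 𝒮 given by a continuous surjection α : H → Q of profinite groups with finite abelian kernel A, a continuous homomorphism φ : G → Q, and a continuous map σ : 𝒮 → H as in the definition. Regard A as a G-module via g·a = h a h^{-1} for any h ∈ H with α(h) = φ(g) (this is well defined since A is abelian and normal in H). Let E = {(g,h) ∈ G × H : φ(g) = α(h)} be the pullback, an extension of G by A via a ↦ (1,a) and p(g,h) = g, and let q : 𝒮 → E be q(s,x) = (s, σ(s,x)). Then the lifting problem has a solution if and only if the relative extension (E,q) is equivalent to the trivial relative extension (A ⋊ G with q₀(s,x) = (0,s)); that is, if and only if there exist a continuous isomorphism f : E → A ⋊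 G commuting with the inclusions of A and the projections to G, and a continuous map a : X → A, such that (0,s) = a(x)·f(q(s,x))·a(x)^{-1} in A ⋊ G for all x ∈ X and s ∈ S_x. -/
/-- The pullback of `φ : G → Q` and `α : H → Q`, as a subgroup of `G × H`:
`E = {(g,h) | φ g = α h}`. -/
def pullbackSubgroup {G H Q : Type} [Group G] [Group H] [Group Q]
    (φ : G →* Q) (α : H →* Q) : Subgroup (G × H) where
  carrier := {x : G × H | φ x.1 = α x.2}
  one_mem' := by simp
  mul_mem' := by
    intro a b ha hb
    simp only [Set.mem_setOf_eq, Prod.fst_mul, Prod.snd_mul, map_mul] at *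
    rw [ha, hb]
  inv_mem' := by
    intro a ha
    simp only [Set.mem_setOf_eq, Prod.fst_inv, Prod.snd_inv, map_inv] at *
    rw [ha]

lemma mem_pullbackSubgroup {G H Q : Type} [Group G] [Group H] [Group Q]
    (φ : G →* Q) (α : H →* Q) (x : G × H) :
    x ∈ pullbackSubgroup φ α ↔ φ x.1 = α x.2 := Iff.rfl

/-- The product topology on a semidirect product of topological groups. -/
def sdpTopology {N G : Type} [Group N] [Group G] [TopologicalSpace N] [TopologicalSpace G]
    (ρ : G →* MulAut N) : TopologicalSpace (N ⋊[ρ] G) :=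
  TopologicalSpace.induced (fun e => (e.left, e.right)) inferInstance

/-- Let `(G,𝒮)` be a profinite group pair and consider a lifting problem
`(α : H → Q, φ : G → Q, σ : 𝒮 → H)` with finite abelian kernel `A = ker α`, the
`G`-action `ρ` on `A` being induced by conjugation by preimages (`hρ`).  Let
`E = {(g,h) | φ g = α h}` be the pullback extension of `G` by `A`, with relative sections
`q (s,x) = (s, σ (s,x))`.  Then the lifting problem has a solution if and only if `(E,q)`
is equivalent to the trivial relative extension `A ⋊[ρ] G` (with its product topology):
there exist a continuous equivalence of extensions `f : E → A ⋊[ρ] G` and a continuous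
map `a : X → A` with `inr s = a x * f (q (s,x)) * (a x)⁻¹` for all `x ∈ X`, `s ∈ S x`. -/
theorem lifting_solution_iff_trivial_relative_extension
    (G : Type) [Group G] [TopologicalSpace G] [IsTopologicalGroup G]
    [CompactSpace G] [T2Space G] [TotallyDisconnectedSpace G]
    (X : Type) [TopologicalSpace X] [CompactSpace X] [T2Space X]
    [TotallyDisconnectedSpace X]
    (S : X → Subgroup G) (hclosed : ∀ x, IsClosed (S x : Set G))
    (hidx : IsClosed {gx : G × X | gx.1 ∈ S gx.2})
    (H Q : Type) [Group H] [TopologicalSpace H] [IsTopologicalGroup H]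
    [CompactSpace H] [T2Space H] [TotallyDisconnectedSpace H]
    [Group Q] [TopologicalSpace Q] [IsTopologicalGroup Q]
    [CompactSpace Q] [T2Space Q] [TotallyDisconnectedSpace Q]
    (α : H →* Q) (hαc : Continuous α) (hαs : Function.Surjective α)
    (hfin : Finite α.ker) (hab : ∀ a b : α.ker, a * b = b * a)
    (φ : G →* Q) (hφc : Continuous φ)
    (σ : {gx : G × X // gx.1 ∈ S gx.2} → H) (hσc : Continuous σ)
    (hσmul : ∀ (x : X) (s s' : G) (hs : s ∈ S x) (hs' : s' ∈ S x),
        σ ⟨(s * s', x), mul_mem hs hs'⟩ = σ ⟨(s, x), hs⟩ * σ ⟨(s', x), hs'⟩)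
    (hσα : ∀ (x : X) (s : G) (hs : s ∈ S x), α (σ ⟨(s, x), hs⟩) = φ s)
    (ρ : G →* MulAut α.ker)
    (hρ : ∀ (g : G) (a : α.ker) (h : H), α h = φ g → ((ρ g a : α.ker) : H) = h * ↑a * h⁻¹) :
    (∃ (φbar : G →* H) (c : X → H),
      Continuous φbar ∧ (∀ g, α (φbar g) = φ g) ∧
      Continuous c ∧ (∀ x, c x ∈ α.ker) ∧
      ∀ (x : X) (s : G) (hs : s ∈ S x), c x * φbar s * (c x)⁻¹ = σ ⟨(s, x), hs⟩)
    ↔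
    (∃ f : pullbackSubgroup φ α →* α.ker ⋊[ρ] G,
      @Continuous _ _ _ (sdpTopology ρ) f ∧
      Function.Bijective f ∧
      (∀ a : α.ker, f ⟨((1 : G), (a : H)),
          (mem_pullbackSubgroup φ α _).mpr (by
            show φ 1 = α ↑a
            rw [map_one, MonoidHom.mem_ker.mp a.2])⟩ = SemidirectProduct.inl a) ∧
      (∀ e : pullbackSubgroup φ α, (f e).right = (e : G × H).1) ∧
      ∃ aa : X → α.ker, Continuous aa ∧
        ∀ (x : X) (s : G) (hs : s ∈ S x),
          SemidirectProduct.inr s =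
            SemidirectProduct.inl (aa x) *
              f ⟨(s, σ ⟨(s, x), hs⟩),
                (mem_pullbackSubgroup φ α _).mpr (hσα x s hs).symm⟩ *
              (SemidirectProduct.inl (aa x))⁻¹) := by
  classical
  letI : TopologicalSpace (α.ker ⋊[ρ] G) := sdpTopology ρ
  constructor
  · rintro ⟨φbar, c, hφbarc, hφbarα, hcc, hcker, hconj⟩
    have hact : ∀ (g : G) (a : α.ker), ((ρ g a : α.ker) : H) = φbar g * a * (φbar g)⁻¹ :=
      fun g a => hρ g a (φbar g) (hφbarα g)
    have hmem : ∀ e : pullbackSubgroup φ α, (e : G × H).2 * (φbar (e : G × H).1)⁻¹ ∈ α.ker := by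
      intro e
      have he : φ (e : G × H).1 = α (e : G × H).2 := e.2
      simp [MonoidHom.mem_ker, map_mul, map_inv, hφbarα, ← he]
    set fmap : pullbackSubgroup φ α →* α.ker ⋊[ρ] G :=
      MonoidHom.mk' (fun e => ⟨⟨(e : G × H).2 * (φbar (e : G × H).1)⁻¹, hmem e⟩,
        (e : G × H).1⟩) (by
          intro a b
          refine SemidirectProduct.ext ?_ rfl
          refine Subtype.ext ?_
          show ((a : G × H).2 * (b : G × H).2) * (φbar ((a : G × H).1 * (b : G × H).1))⁻¹ =
            ((a : G × H).2 * (φbar (a : G × H).1)⁻¹) *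
              ((ρ (a : G × H).1 ⟨(b : G × H).2 * (φbar (b : G × H).1)⁻¹, hmem b⟩ : α.ker) : H)
          rw [hact]
          simp only [map_mul, mul_inv_rev]
          group) with hfmap
    have hfleft : ∀ e : pullbackSubgroup φ α,
        (((fmap e).left : α.ker) : H) = (e : G × H).2 * (φbar (e : G × H).1)⁻¹ := fun _ => rfl
    have hfright : ∀ e : pullbackSubgroup φ α, (fmap e).right = (e : G × H).1 := fun _ => rfl
    refine ⟨fmap, ?_, ?_, ?_, hfright, ?_⟩
    · -- continuity
      apply continuous_induced_rng.mpr
      refine Continuous.prodMk ?_ ?_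
      · exact Continuous.subtype_mk ((continuous_snd.comp continuous_subtype_val).mul
          ((hφbarc.comp (continuous_fst.comp continuous_subtype_val)).inv)) _
      · exact continuous_fst.comp continuous_subtype_val
    · -- bijective
      rw [Function.bijective_iff_has_inverse]
      refine ⟨fun p => ⟨(p.right, (p.left : H) * φbar p.right), ?_⟩, ?_, ?_⟩
      · show φ p.right = α ((p.left : H) * φbar p.right)
        rw [map_mul, MonoidHom.mem_ker.mp p.left.2, one_mul, hφbarα]
      · intro e
        refine Subtype.ext (Prod.ext rfl ?_)
        show ((e : G × H).2 * (φbar (e : G × H).1)⁻¹) * φbar (e : G × H).1 = (e : G × H).2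
        group
      · intro p
        refine SemidirectProduct.ext (Subtype.ext ?_) rfl
        show ((p.left : H) * φbar p.right) * (φbar p.right)⁻¹ = (p.left : H)
        group
    · intro a
      refine SemidirectProduct.ext (Subtype.ext ?_) rfl
      show (a : H) * (φbar 1)⁻¹ = ((a : α.ker) : H)
      rw [map_one, inv_one, mul_one]
    · refine ⟨fun x => ⟨(c x)⁻¹, inv_mem (hcker x)⟩, Continuous.subtype_mk hcc.inv _, ?_⟩
      intro x s hs
      set q : pullbackSubgroup φ α := ⟨(s, σ ⟨(s, x), hs⟩),
        (mem_pullbackSubgroup φ α _).mpr (hσα x s hs).symm⟩ with hq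
      have hfq : (((fmap q).left : α.ker) : H) = σ ⟨(s, x), hs⟩ * (φbar s)⁻¹ := rfl
      have hfqr : (fmap q).right = s := rfl
      have hσ : σ ⟨(s, x), hs⟩ = c x * φbar s * (c x)⁻¹ := (hconj x s hs).symm
      refine SemidirectProduct.ext ?_ ?_
      · refine Subtype.ext ?_
        simp only [SemidirectProduct.mul_left, SemidirectProduct.mul_right,
          SemidirectProduct.inv_left, SemidirectProduct.inv_right,
          SemidirectProduct.left_inl, SemidirectProduct.right_inl,
          SemidirectProduct.left_inr, hfqr, map_one, inv_one,
          MulAut.one_apply, one_mul, Subgroup.coe_mul, OneMemClass.coe_one,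
          InvMemClass.coe_inv, hact, hfq, hσ]
        group
      · simp only [SemidirectProduct.mul_right, SemidirectProduct.right_inl,
          SemidirectProduct.right_inr, SemidirectProduct.inv_right, hfqr, inv_one,
          one_mul, mul_one]
  · rintro ⟨f, hfc, hfb, hinl, hright, aa, haac, haa⟩
    haveI : Finite α.ker := hfin
    have hEclosed : IsClosed ((pullbackSubgroup φ α : Subgroup (G × H)) : Set (G × H)) := by
      have : ((pullbackSubgroup φ α : Subgroup (G × H)) : Set (G × H))
          = {x : G × H | φ x.1 = α x.2} := rfl
      rw [this]
      exact isClosed_eq (hφc.comp continuous_fst) (hαc.comp continuous_snd)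
    haveI : CompactSpace (pullbackSubgroup φ α) :=
      isCompact_iff_compactSpace.mp hEclosed.isCompact
    have hemb : Topology.IsInducing (fun e : α.ker ⋊[ρ] G => (e.left, e.right)) := ⟨rfl⟩
    haveI : T2Space (α.ker ⋊[ρ] G) := by
      refine Topology.IsEmbedding.t2Space (f := fun e : α.ker ⋊[ρ] G => (e.left, e.right)) ?_
      exact ⟨hemb, fun a b h => SemidirectProduct.ext (congrArg Prod.fst h) (congrArg Prod.snd h)⟩
    set F : (pullbackSubgroup φ α) ≃* (α.ker ⋊[ρ] G) := MulEquiv.ofBijective f hfb with hF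
    have hFcoe : ∀ e, F e = f e := fun _ => rfl
    have hsymmc : Continuous (F.symm : (α.ker ⋊[ρ] G) → pullbackSubgroup φ α) :=
      Continuous.continuous_symm_of_equiv_compact_to_t2 (f := F.toEquiv) hfc
    have hinrc : Continuous (SemidirectProduct.inr : G →* α.ker ⋊[ρ] G) := by
      apply continuous_induced_rng.mpr
      exact continuous_const.prodMk continuous_id
    -- define φbar
    set φbar : G →* H :=
      ((MonoidHom.snd G H).comp (pullbackSubgroup φ α).subtype).comp
        (F.symm.toMonoidHom.comp (SemidirectProduct.inr : G →* α.ker ⋊[ρ] G)) with hφbar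
    have hφbar_apply : ∀ g : G, φbar g = ((F.symm (SemidirectProduct.inr g) : G × H)).2 :=
      fun _ => rfl
    have hfst : ∀ g : G, ((F.symm (SemidirectProduct.inr g) : G × H)).1 = g := by
      intro g
      have h1 := hright (F.symm (SemidirectProduct.inr g))
      have h2 : f (F.symm (SemidirectProduct.inr g)) = SemidirectProduct.inr g := by
        have := F.apply_symm_apply (SemidirectProduct.inr g)
        rw [hFcoe] at this
        exact this
      rw [h2] at h1
      exact h1.symm
    have hαφbar : ∀ g, α (φbar g) = φ g := by
      intro g
      have hm : φ ((F.symm (SemidirectProduct.inr g) : G × H)).1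
          = α ((F.symm (SemidirectProduct.inr g) : G × H)).2 :=
        (F.symm (SemidirectProduct.inr g)).2
      rw [hfst g] at hm
      rw [hφbar_apply]
      exact hm.symm
    refine ⟨φbar, fun x => ((aa x : α.ker) : H)⁻¹, ?_, hαφbar, ?_, ?_, ?_⟩
    · -- continuity of φbar
      rw [hφbar]
      exact continuous_snd.comp (continuous_subtype_val.comp (hsymmc.comp hinrc))
    · exact ((continuous_subtype_val.comp haac).inv)
    · intro x
      exact inv_mem (aa x).2
    · intro x s hs
      set q : pullbackSubgroup φ α := ⟨(s, σ ⟨(s, x), hs⟩),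
        (mem_pullbackSubgroup φ α _).mpr (hσα x s hs).symm⟩ with hq
      have ea_mem : ((1 : G), ((aa x : α.ker) : H)) ∈ pullbackSubgroup φ α := by
        show φ 1 = α ((aa x : α.ker) : H)
        rw [map_one, MonoidHom.mem_ker.mp (aa x).2]
      set ea : pullbackSubgroup φ α := ⟨((1 : G), ((aa x : α.ker) : H)), ea_mem⟩ with hea
      have hFea : f ea = SemidirectProduct.inl (aa x) := hinl (aa x)
      have h1 : F.symm (SemidirectProduct.inr s) = ea * q * ea⁻¹ := by
        have h0 := haa x s hs
        rw [MulEquiv.symm_apply_eq, map_mul, map_mul, map_inv]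
        simp only [hFcoe]
        rw [hFea]
        exact h0
      have h2 : φbar s = ((aa x : α.ker) : H) * σ ⟨(s, x), hs⟩ * ((aa x : α.ker) : H)⁻¹ := by
        rw [hφbar_apply, h1]
        simp only [Subgroup.coe_mul, Subgroup.coe_inv, Prod.snd_mul, Prod.snd_inv, hq, hea]
      rw [h2]
      group
end

section
/- Let G be a profinite group and let 𝒮 = {S_x}_{x∈X} be a family of closed subgroups of G continuously indexed by a profinite space X. Let U be an open normal subgroup of G. Then there is a finite partition {A_y : y ∈ Y} of X into clopen sets such that for each y ∈ Y there exists x ∈ A_y with S_{x'} ⊆ S_x U for all x' ∈ A_y. -/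
open Pointwise

section Aux

variable {G : Type} [Group G] [TopologicalSpace G] [IsTopologicalGroup G]
    [CompactSpace G] [T2Space G]
    {X : Type} [TopologicalSpace X] [CompactSpace X] [T2Space X]

/-- If the family is continuously indexed, then for closed `C ⊆ G` the set of `x` whose
subgroup meets `C` is closed. -/
lemma aux_closed_inter (S : X → Subgroup G)
    (hidx : IsClosed {gx : G × X | gx.1 ∈ S gx.2}) {C : Set G} (hC : IsClosed C) :
    IsClosed {x : X | ((S x : Set G) ∩ C).Nonempty} := by
  have h1 : {x : X | ((S x : Set G) ∩ C).Nonempty}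
      = Prod.snd '' ({gx : G × X | gx.1 ∈ S gx.2} ∩ (C ×ˢ Set.univ)) := by
    ext x
    constructor
    · rintro ⟨g, hg1, hg2⟩
      exact ⟨(g, x), ⟨hg1, hg2, trivial⟩, rfl⟩
    · rintro ⟨⟨g, x'⟩, ⟨hg1, hg2, -⟩, rfl⟩
      exact ⟨g, hg1, hg2⟩
  rw [h1]
  exact (((hidx.inter (hC.prod isClosed_univ)).isCompact).image continuous_snd).isClosed

/-- In a profinite space, a closed set inside an open set can be separated by a clopen set. -/
lemma clopen_sandwich {Z : Type} [TopologicalSpace Z] [CompactSpace Z] [T2Space Z]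
    [TotallyDisconnectedSpace Z] {F O : Set Z} (hF : IsClosed F) (hO : IsOpen O)
    (hFO : F ⊆ O) : ∃ K : Set Z, IsClopen K ∧ F ⊆ K ∧ K ⊆ O := by
  choose V hV hxV hVO using fun x : F => compact_exists_isClopen_in_isOpen hO (hFO x.2)
  obtain ⟨t, ht⟩ := hF.isCompact.elim_finite_subcover V (fun x => (hV x).2)
    (fun x hx => Set.mem_iUnion.2 ⟨⟨x, hx⟩, hxV ⟨x, hx⟩⟩)
  refine ⟨⋃ x ∈ t, V x, isClopen_biUnion_finset (fun x _ => hV x), ht,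
    Set.iUnion₂_subset fun x _ => hVO x⟩

end Aux

/-- Lemma on finite quotients of a continuously indexed family.
Let `G` be a profinite group, `{S x}_{x ∈ X}` a family of closed subgroups of `G`
continuously indexed by a profinite space `X`, and `U` an open normal subgroup of `G`.
Then there is a finite partition `{A y : y ∈ Y}` of `X` into clopen sets such that for
each `y ∈ Y` there exists `x ∈ A y` with `S x' ⊆ S x * U` for all `x' ∈ A y`. -/
theorem finite_quotient_partition
    (G : Type) [Group G] [TopologicalSpace G] [IsTopologicalGroup G]
    [CompactSpace G] [T2Space G] [TotallyDisconnectedSpace G]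
    (X : Type) [TopologicalSpace X] [CompactSpace X] [T2Space X]
    [TotallyDisconnectedSpace X]
    (S : X → Subgroup G) (hclosed : ∀ x, IsClosed (S x : Set G))
    (hidx : IsClosed {gx : G × X | gx.1 ∈ S gx.2})
    (U : Subgroup G) (hUnormal : U.Normal) (hUopen : IsOpen (U : Set G)) :
    ∃ (Y : Type) (_ : Finite Y) (A : Y → Set X),
      (∀ y, IsClopen (A y)) ∧
      (∀ x : X, ∃! y : Y, x ∈ A y) ∧
      (∀ y, ∃ x ∈ A y, ∀ x' ∈ A y, (S x' : Set G) ⊆ (S x : Set G) * (U : Set G)) := by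
  classical
  -- the "saturation" of each subgroup
  set V : X → Set G := fun x => (S x : Set G) * (U : Set G) with hV
  have hUclosed : IsClosed (U : Set G) := U.isClosed_of_isOpen hUopen
  have hUU : (U : Set G) * (U : Set G) = (U : Set G) := by
    apply subset_antisymm
    · rintro g ⟨u, hu, v, hv, rfl⟩
      exact U.mul_mem hu hv
    · intro u hu
      exact ⟨u, hu, 1, U.one_mem, mul_one u⟩
  have hVU : ∀ x, V x * (U : Set G) = V x := by
    intro x
    show (S x : Set G) * (U : Set G) * (U : Set G) = _
    rw [mul_assoc, hUU]
  have hSV : ∀ x, (S x : Set G) ⊆ V x := by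
    intro x g hg
    exact ⟨g, hg, 1, U.one_mem, mul_one g⟩
  have hVmono : ∀ x x' : X, (S x' : Set G) ⊆ V x → V x' ⊆ V x := by
    intro x x' h
    calc V x' = (S x' : Set G) * (U : Set G) := rfl
      _ ⊆ V x * (U : Set G) := Set.mul_subset_mul_right h
      _ = V x := hVU x
  have hVopen : ∀ x, IsOpen (V x) := fun x => hUopen.mul_left
  -- membership of `t` in `V x` as an intersection condition
  have hmemV : ∀ (t : G) (x : X), t ∈ V x ↔ ((S x : Set G) ∩ t • (U : Set G)).Nonempty := by
    intro t x
    constructor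
    · rintro ⟨s, hs, u, hu, rfl⟩
      refine ⟨s, hs, Set.mem_smul_set.2 ⟨u⁻¹, U.inv_mem hu, ?_⟩⟩
      simp [smul_eq_mul]
    · rintro ⟨s, hs, hsU⟩
      obtain ⟨u, hu, rfl⟩ := Set.mem_smul_set.1 hsU
      refine ⟨t * u, hs, u⁻¹, U.inv_mem hu, ?_⟩
      simp [smul_eq_mul]
  have hclosed_mem : ∀ t : G, IsClosed {x : X | t ∈ V x} := by
    intro t
    have := aux_closed_inter S hidx (hUclosed.smul t)
    simpa only [hmemV t] using this
  have hopen_sub : ∀ {C : Set G}, IsOpen C → IsOpen {x : X | (S x : Set G) ⊆ C} := by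
    intro C hC
    have h1 : {x : X | (S x : Set G) ⊆ C}ᶜ = {x : X | ((S x : Set G) ∩ Cᶜ).Nonempty} := by
      ext x
      simp only [Set.mem_compl_iff, Set.mem_setOf_eq, Set.not_subset]
      constructor
      · rintro ⟨g, hg, hgc⟩; exact ⟨g, hg, hgc⟩
      · rintro ⟨g, hg, hgc⟩; exact ⟨g, hg, hgc⟩
    rw [← isClosed_compl_iff, ← compl_compl {x : X | (S x : Set G) ⊆ C}, isClosed_compl_iff]
    rw [h1, ← isClosed_compl_iff, compl_compl]
    exact aux_closed_inter S hidx hC.isClosed_compl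
  -- a finite transversal of `U` in `G`
  obtain ⟨R, hR⟩ := isCompact_univ.elim_finite_subcover (fun g : G => g • (U : Set G))
    (fun g => hUopen.smul g)
    (fun g _ => Set.mem_iUnion.2 ⟨g, Set.mem_smul_set.2 ⟨1, U.one_mem, mul_one g⟩⟩)
  -- `V x` is determined by `V x ∩ R`
  have hVdet : ∀ x : X, V x = (↑(R.filter (· ∈ V x)) : Set G) * (U : Set G) := by
    intro x
    apply subset_antisymm
    · intro v hv
      obtain ⟨r, hrR, hrv⟩ := Set.mem_iUnion₂.1 (hR (Set.mem_univ v))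
      obtain ⟨u, hu, rfl⟩ := Set.mem_smul_set.1 hrv
      have hrV : r ∈ V x := by
        have : r * u * u⁻¹ ∈ V x * (U : Set G) :=
          Set.mul_mem_mul hv (U.inv_mem hu)
        rw [hVU x] at this
        simpa using this
      exact Set.mul_mem_mul (by simp [Finset.mem_filter, hrR, hrV]) hu
    · have h1 : (↑(R.filter (· ∈ V x)) : Set G) ⊆ V x := by
        intro r hr
        rw [Finset.mem_coe, Finset.mem_filter] at hr
        exact hr.2
      calc (↑(R.filter (· ∈ V x)) : Set G) * (U : Set G)
          ⊆ V x * (U : Set G) := Set.mul_subset_mul_right h1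
        _ = V x := hVU x
  -- if `V x ∩ R ⊆ V x'` then `V x ⊆ V x'`
  have hVdet' : ∀ x x' : X, (∀ r ∈ R.filter (· ∈ V x), r ∈ V x') → V x ⊆ V x' := by
    intro x x' h
    rw [hVdet x]
    have h1 : (↑(R.filter (· ∈ V x)) : Set G) ⊆ V x' := fun r hr => h r hr
    calc (↑(R.filter (· ∈ V x)) : Set G) * (U : Set G)
        ⊆ V x' * (U : Set G) := Set.mul_subset_mul_right h1
      _ = V x' := hVU x'
  -- the range of `V` is finite
  have hVfin : (Set.range V).Finite := by
    have : Set.range V ⊆ (fun F : Finset G => (↑F : Set G) * (U : Set G)) '' ↑R.powerset := by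
      rintro T ⟨x, rfl⟩
      exact ⟨R.filter (· ∈ V x),
        Finset.mem_coe.2 (Finset.mem_powerset.2 (Finset.filter_subset _ _)),
        (hVdet x).symm⟩
    exact Set.Finite.subset ((R.powerset.finite_toSet).image _) this
  -- main induction
  have main : ∀ (n : ℕ) (B : Set X), IsClopen B → (V '' B).ncard ≤ n →
      ∃ 𝒜 : Finset (Set X), (∀ A ∈ 𝒜, IsClopen A) ∧
        (↑𝒜 : Set (Set X)).Pairwise Disjoint ∧ (⋃ A ∈ 𝒜, A) = B ∧
        ∀ A ∈ 𝒜, ∃ x ∈ A, ∀ x' ∈ A, (S x' : Set G) ⊆ V x := by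
    intro n
    induction n with
    | zero =>
      intro B hB hcard
      have hBfin : (V '' B).Finite := hVfin.subset (Set.image_subset_range V B)
      have hBempty : B = ∅ := by
        have h0 : (V '' B).ncard = 0 := Nat.le_zero.1 hcard
        have := (Set.ncard_eq_zero hBfin).1 h0
        exact Set.image_eq_empty.1 this
      exact ⟨∅, by simp, by simp, by simp [hBempty], by simp⟩
    | succ m ih =>
      intro B hB hcard
      rcases Set.eq_empty_or_nonempty B with hBe | hBne
      · exact ⟨∅, by simp, by simp, by simp [hBe], by simp⟩
      -- choose a maximal value of `V` on `B`
      have hfin : (V '' B).Finite := hVfin.subset (Set.image_subset_range V B)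
      obtain ⟨T, hTmem, hTmax⟩ := Set.Finite.exists_maximalFor id (V '' B) hfin
        (hBne.image V)
      obtain ⟨x₀, hx₀B, hx₀T⟩ := hTmem
      -- the fiber over `T` is closed
      set F : Set X := B ∩ ⋂ r ∈ R.filter (· ∈ T), {x : X | r ∈ V x} with hF
      have hFclosed : IsClosed F :=
        hB.isClosed.inter (isClosed_biInter fun r _ => hclosed_mem r)
      have hFval : ∀ x ∈ F, V x = T := by
        rintro x ⟨hxB, hxI⟩
        have hTsub : T ⊆ V x := by
          rw [← hx₀T]
          apply hVdet' x₀ x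
          intro r hr
          have h2 := Set.mem_iInter₂.1 hxI r
          rw [hx₀T] at hr
          exact h2 hr
        exact subset_antisymm (hTmax ⟨x, hxB, rfl⟩ hTsub) hTsub
      have hx₀F : x₀ ∈ F := by
        rw [hF]
        refine ⟨hx₀B, Set.mem_iInter₂.2 fun r hr => ?_⟩
        rw [Finset.mem_filter] at hr
        show r ∈ V x₀
        rw [hx₀T]
        exact hr.2
      -- separate `F` from the rest by a clopen set inside the open set where `S x ⊆ T`
      have hTopen : IsOpen T := hx₀T ▸ hVopen x₀
      have hO : IsOpen ({x : X | (S x : Set G) ⊆ T} ∩ B) :=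
        (hopen_sub hTopen).inter hB.isOpen
      have hFO : F ⊆ {x : X | (S x : Set G) ⊆ T} ∩ B := by
        intro x hxF
        refine ⟨?_, hxF.1⟩
        have := hFval x hxF
        rw [← this]
        exact hSV x
      obtain ⟨K, hKclopen, hFK, hKO⟩ := clopen_sandwich hFclosed hO hFO
      have hKB : K ⊆ B := fun x hx => (hKO hx).2
      -- the rest has fewer values
      set B' : Set X := B \ K with hB'
      have hB'clopen : IsClopen B' := hB.diff hKclopen
      have hVB' : V '' B' ⊆ (V '' B) \ {T} := by
        rintro _ ⟨x, hxB', rfl⟩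
        refine ⟨⟨x, hxB'.1, rfl⟩, ?_⟩
        intro hVx
        simp only [Set.mem_singleton_iff] at hVx
        apply hxB'.2
        apply hFK
        rw [hF]
        refine ⟨hxB'.1, Set.mem_iInter₂.2 fun r hr => ?_⟩
        rw [Finset.mem_filter] at hr
        show r ∈ V x
        rw [hVx]
        exact hr.2
      have hcard' : (V '' B').ncard ≤ m := by
        have h1 : (V '' B').ncard ≤ ((V '' B) \ {T}).ncard :=
          Set.ncard_le_ncard hVB' hfin.diff
        have h2 : ((V '' B) \ {T}).ncard = (V '' B).ncard - 1 := by
          rw [← Set.ncard_diff_singleton_of_mem (hx₀T ▸ Set.mem_image_of_mem V hx₀B)]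
        have h3 : (V '' B).ncard ≠ 0 :=
          Set.ncard_ne_zero_of_mem (hx₀T ▸ Set.mem_image_of_mem V hx₀B) hfin
        omega
      obtain ⟨𝒜', h𝒜'clopen, h𝒜'disj, h𝒜'union, h𝒜'max⟩ := ih B' hB'clopen hcard'
      -- assemble
      refine ⟨insert K 𝒜', ?_, ?_, ?_, ?_⟩
      · intro A hA
        rcases Finset.mem_insert.1 hA with rfl | hA
        · exact hKclopen
        · exact h𝒜'clopen A hA
      · rw [Finset.coe_insert]
        apply Set.Pairwise.insert
        · exact h𝒜'disj
        · intro A hA _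
          have hAB' : A ⊆ B' := by
            rw [← h𝒜'union]
            exact fun z hz => Set.mem_iUnion₂.2 ⟨A, hA, hz⟩
          constructor
          · exact Set.disjoint_left.2 fun x hxK hxA => (hAB' hxA).2 hxK
          · exact Set.disjoint_left.2 fun x hxA hxK => (hAB' hxA).2 hxK
      · rw [Finset.set_biUnion_insert, h𝒜'union]
        rw [Set.union_diff_cancel' (le_refl K) hKB]
      · intro A hA
        rcases Finset.mem_insert.1 hA with rfl | hA
        · refine ⟨x₀, hFK hx₀F, fun x' hx' => ?_⟩
          have := (hKO hx').1
          rw [← hx₀T] at this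
          exact this
        · exact h𝒜'max A hA
  -- conclude
  obtain ⟨𝒜, h𝒜clopen, h𝒜disj, h𝒜union, h𝒜max⟩ :=
    main (V '' (Set.univ : Set X)).ncard Set.univ isClopen_univ le_rfl
  refine ⟨{A : Set X // A ∈ 𝒜}, inferInstance, fun y => y.1, fun y => h𝒜clopen y.1 y.2,
    ?_, fun y => h𝒜max y.1 y.2⟩
  intro x
  have hx : x ∈ ⋃ A ∈ 𝒜, A := by rw [h𝒜union]; trivial
  obtain ⟨A, hA, hxA⟩ := Set.mem_iUnion₂.1 hx
  refine ⟨⟨A, hA⟩, hxA, ?_⟩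
  rintro ⟨A', hA'⟩ hxA'
  apply Subtype.ext
  by_contra hne
  simp only [ne_eq] at hne
  exact Set.disjoint_left.1 (h𝒜disj hA' hA (by simpa using hne)) hxA' hxA
end

section
/- Let G be a profinite group, let 𝒮 = {S_x}_{x∈X} be a family of closed subgroups of G continuously indexed by a profinite space X, and let f : 𝒮 → F be a continuous function to a finite discrete set F. Then there exists a finite quotient (U,𝒯,Y) of 𝒮 such that f factors through the natural map 𝒮 → 𝒯; that is, there exist an open normal subgroup U of G and a finite clopen partition {A_y}_{y∈Y} of X satisfying the conditions of a finite quotient, such that f(s,x) = f(s',x') whenever sU = s'U and x, x' lie in the same part A_y. -/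
open Pointwise

private lemma open_avoid {G X : Type} [Group G] [TopologicalSpace G] [TopologicalSpace X]
    [CompactSpace G] [CompactSpace X] [T2Space X]
    (S : X → Subgroup G)
    (hidx : IsClosed {gx : G × X | gx.1 ∈ S gx.2})
    {K : Set G} (hK : IsClosed K) :
    IsOpen {x : X | ∀ g ∈ S x, g ∉ K} := by
  rw [← isClosed_compl_iff]
  have heq : {x : X | ∀ g ∈ S x, g ∉ K}ᶜ
      = Prod.snd '' ({gx : G × X | gx.1 ∈ S gx.2} ∩ K ×ˢ (Set.univ : Set X)) := by
    ext x
    simp only [Set.mem_compl_iff, Set.mem_setOf_eq, not_forall, Set.mem_image, Set.mem_inter_iff,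
      Set.mem_prod, Set.mem_univ, and_true, not_not, exists_prop]
    constructor
    · rintro ⟨g, hg, hgK⟩
      exact ⟨(g, x), ⟨hg, hgK⟩, rfl⟩
    · rintro ⟨⟨g, x'⟩, ⟨hg, hgK⟩, rfl⟩
      exact ⟨g, hg, hgK⟩
  rw [heq]
  exact (((hidx.inter (hK.prod isClosed_univ)).isCompact).image continuous_snd).isClosed

private lemma partition_lemma {X : Type} [TopologicalSpace X] [CompactSpace X]
    {Q : Type} [Finite Q] (img : X → Set Q)
    (hop : ∀ T : Set Q, IsOpen {x | img x ⊆ T})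
    (hbasis : ∀ (x : X) (O : Set X), IsOpen O → x ∈ O → ∃ W, IsClopen W ∧ x ∈ W ∧ W ⊆ O) :
    ∀ (n : ℕ) (A : Set X), IsClopen A → ({q | ∃ x ∈ A, q ∈ img x}).ncard ≤ n →
    ∃ PP : Finset (Set X),
      (∀ B ∈ PP, IsClopen B ∧ B.Nonempty ∧ ∃ x ∈ B, ∀ x' ∈ B, img x' ⊆ img x) ∧
      ((PP : Set (Set X)).Pairwise Disjoint) ∧
      ⋃₀ ↑PP = A := by
  classical
  intro n
  induction n with
  | zero =>
    intro A hA hcard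
    have hempty : {q | ∃ x ∈ A, q ∈ img x} = ∅ :=
      Set.ncard_eq_zero (Set.toFinite _) |>.mp (Nat.le_zero.mp hcard)
    rcases A.eq_empty_or_nonempty with hAe | ⟨x₀, hx₀⟩
    · refine ⟨∅, ?_, ?_, ?_⟩ <;> simp [hAe]
    · refine ⟨{A}, ?_, ?_, ?_⟩
      · intro B hB
        rw [Finset.mem_singleton] at hB
        rw [hB]
        refine ⟨hA, ⟨x₀, hx₀⟩, x₀, hx₀, fun x' hx' q hq => ?_⟩
        exact absurd (show q ∈ {q | ∃ x ∈ A, q ∈ img x} from ⟨x', hx', hq⟩)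
          (by rw [hempty]; exact Set.notMem_empty q)
      · simp
      · simp
  | succ n IH =>
    intro A hA hcard
    by_cases hmax : ∃ x₀ ∈ A, ∀ x' ∈ A, img x' ⊆ img x₀
    · obtain ⟨x₀, hx₀, hmax⟩ := hmax
      refine ⟨{A}, ?_, by simp, by simp⟩
      intro B hB
      rw [Finset.mem_singleton] at hB
      rw [hB]
      exact ⟨hA, ⟨x₀, hx₀⟩, x₀, hx₀, hmax⟩
    rcases A.eq_empty_or_nonempty with hAe | hAne
    · refine ⟨∅, ?_, ?_, ?_⟩ <;> simp [hAe]
    push_neg at hmax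
    have key : ∀ x ∈ A, ∃ Wx : Set X, IsClopen Wx ∧ x ∈ Wx ∧ Wx ⊆ A ∧
        ({q | ∃ x' ∈ Wx, q ∈ img x'}).ncard ≤ n := by
      intro x hx
      obtain ⟨x₁, hx₁, hnsub⟩ := hmax x hx
      obtain ⟨q, hq₁, hq₂⟩ := Set.not_subset.mp hnsub
      have hopen : IsOpen (A ∩ {x'' | img x'' ⊆ img x}) := hA.2.inter (hop _)
      obtain ⟨Wx, hWc, hxW, hWsub⟩ := hbasis x _ hopen ⟨hx, Set.Subset.rfl⟩
      refine ⟨Wx, hWc, hxW, hWsub.trans Set.inter_subset_left, ?_⟩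
      have h1 : {q' | ∃ x' ∈ Wx, q' ∈ img x'} ⊆ {q' | ∃ x ∈ A, q' ∈ img x} \ {q} := by
        rintro q' ⟨x', hx'W, hq'⟩
        have hm := hWsub hx'W
        refine ⟨⟨x', hm.1, hq'⟩, fun h => hq₂ ?_⟩
        rw [Set.mem_singleton_iff] at h
        exact h ▸ hm.2 hq'
      calc ({q' | ∃ x' ∈ Wx, q' ∈ img x'}).ncard
          ≤ ({q' | ∃ x ∈ A, q' ∈ img x} \ {q}).ncard :=
            Set.ncard_le_ncard h1 (Set.toFinite _)
        _ = ({q' | ∃ x ∈ A, q' ∈ img x}).ncard - 1 :=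
            Set.ncard_diff_singleton_of_mem ⟨x₁, hx₁, hq₁⟩
        _ ≤ n := by omega
    choose Wf hWc hWmem hWsubA hWcard using key
    have hAcomp : IsCompact A := hA.1.isCompact
    obtain ⟨t, ht⟩ := hAcomp.elim_finite_subcover (fun a : A => Wf a.1 a.2)
      (fun a => (hWc a.1 a.2).2)
      (fun x hx => Set.mem_iUnion.mpr ⟨⟨x, hx⟩, hWmem x hx⟩)
    set k := t.card with hk
    set e : ↥t ≃ Fin k := t.equivFin with he
    set WW : Fin k → Set X := fun j => Wf (e.symm j).1.1 (e.symm j).1.2 with hWW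
    have hWWclopen : ∀ j, IsClopen (WW j) := fun j => hWc _ _
    have hWWsubA : ∀ j, WW j ⊆ A := fun j => hWsubA _ _
    set D : Fin k → Set X := fun j => WW j \ ⋃ l : {l : Fin k // l < j}, WW l.1 with hD
    have hDclopen : ∀ j, IsClopen (D j) := by
      intro j
      refine (hWWclopen j).diff ⟨?_, ?_⟩
      · exact isClosed_iUnion_of_finite fun (l : {l : Fin k // l < j}) => (hWWclopen l.1).1
      · exact isOpen_iUnion fun (l : {l : Fin k // l < j}) => (hWWclopen l.1).2
    have hDsubWW : ∀ j, D j ⊆ WW j := fun j => Set.diff_subset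
    have hDmem : ∀ (x : X) (j : Fin k), x ∈ D j ↔ x ∈ WW j ∧ ∀ l, l < j → x ∉ WW l := by
      intro x j
      constructor
      · rintro ⟨h1, h2⟩
        exact ⟨h1, fun l hl hxl => h2 (Set.mem_iUnion.mpr ⟨⟨l, hl⟩, hxl⟩)⟩
      · rintro ⟨h1, h2⟩
        refine ⟨h1, fun hx => ?_⟩
        obtain ⟨⟨l, hl⟩, hxl⟩ := Set.mem_iUnion.mp hx
        exact h2 l hl hxl
    have hDcover : A ⊆ ⋃ j, D j := by
      intro x hx
      have hx' := ht hx
      rw [Set.mem_iUnion₂] at hx'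
      obtain ⟨a, ha, hxa⟩ := hx'
      have hxWW : x ∈ WW (e ⟨a, ha⟩) := by
        show x ∈ Wf (e.symm (e ⟨a, ha⟩)).1.1 (e.symm (e ⟨a, ha⟩)).1.2
        rw [Equiv.symm_apply_apply]
        exact hxa
      set s : Finset (Fin k) := Finset.univ.filter (fun j => x ∈ WW j) with hs
      have hsne : s.Nonempty := ⟨e ⟨a, ha⟩, by simp [hs, hxWW]⟩
      set j₀ := s.min' hsne with hj₀
      refine Set.mem_iUnion.mpr ⟨j₀, (hDmem x j₀).mpr ⟨?_, ?_⟩⟩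
      · have := s.min'_mem hsne
        simp only [hs, Finset.mem_filter] at this
        exact this.2
      · intro l hl hxl
        have : j₀ ≤ l := s.min'_le l (by simp [hs, hxl])
        omega
    have hDcard : ∀ j, ({q | ∃ x ∈ D j, q ∈ img x}).ncard ≤ n := by
      intro j
      have h2 : ({q | ∃ x ∈ WW j, q ∈ img x}).ncard ≤ n :=
        hWcard (e.symm j).1.1 (e.symm j).1.2
      refine le_trans (Set.ncard_le_ncard ?_ (Set.toFinite _)) h2
      rintro q ⟨x, hx, hq⟩
      exact ⟨x, hDsubWW j hx, hq⟩
    have hIH : ∀ j : Fin k, ∃ PP : Finset (Set X),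
        (∀ B ∈ PP, IsClopen B ∧ B.Nonempty ∧ ∃ x ∈ B, ∀ x' ∈ B, img x' ⊆ img x) ∧
        ((PP : Set (Set X)).Pairwise Disjoint) ∧ ⋃₀ ↑PP = D j :=
      fun j => IH (D j) (hDclopen j) (hDcard j)
    choose Pfam hprops hpair hunion using hIH
    have hsubD : ∀ (j : Fin k) (B : Set X), B ∈ Pfam j → B ⊆ D j := by
      intro j B hB
      rw [← hunion j]
      exact Set.subset_sUnion_of_mem hB
    have hDdisj : ∀ j l : Fin k, j ≠ l → Disjoint (D j) (D l) := by
      intro j l hjl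
      rcases hjl.lt_or_gt with h | h
      · exact Set.disjoint_left.mpr fun x hxj hxl =>
          (((hDmem x l).mp hxl).2 j h) (hDsubWW j hxj)
      · exact Set.disjoint_left.mpr fun x hxj hxl =>
          (((hDmem x j).mp hxj).2 l h) (hDsubWW l hxl)
    refine ⟨Finset.univ.biUnion Pfam, ?_, ?_, ?_⟩
    · intro B hB
      rw [Finset.mem_biUnion] at hB
      obtain ⟨j, _, hB⟩ := hB
      exact hprops j B hB
    · intro B hB C hC hne
      rw [Finset.mem_coe, Finset.mem_biUnion] at hB hC
      obtain ⟨j, _, hB⟩ := hB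
      obtain ⟨l, _, hC⟩ := hC
      by_cases hjl : j = l
      · subst hjl
        exact hpair j hB hC hne
      · exact ((hDdisj j l hjl).mono (hsubD j B hB) (hsubD l C hC))
    · ext x
      simp only [Set.mem_sUnion, Finset.mem_coe, Finset.mem_biUnion, Finset.mem_univ, true_and]
      constructor
      · rintro ⟨B, ⟨j, hB⟩, hxB⟩
        exact hWWsubA j (hDsubWW j (hsubD j B hB hxB))
      · intro hx
        obtain ⟨j, hj⟩ := Set.mem_iUnion.mp (hDcover hx)
        have : x ∈ ⋃₀ ↑(Pfam j) := (hunion j).symm ▸ hj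
        obtain ⟨B, hB, hxB⟩ := this
        exact ⟨B, ⟨j, hB⟩, hxB⟩

/-- A continuous function from the sheaf space `𝒮 = {(g,x) | g ∈ S x}` of a
continuously indexed family of closed subgroups of a profinite group `G` to a finite discrete
set factors through a finite quotient `(U, 𝒯, Y)` of `𝒮`: there is an open normal subgroup
`U ≤ G` and a finite clopen partition of `X` (encoded by a surjection `π : X → Y` onto a
finite set with clopen fibres) such that each part has a point `x` with `S x' U ⊆ S x U` for
every `x'` in the same part, and `f (s,x) = f (s',x')` whenever `sU = s'U` and `π x = π x'`. -/
theorem factor_through_finite_quotient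
    (G : Type) [Group G] [TopologicalSpace G] [IsTopologicalGroup G]
    [CompactSpace G] [T2Space G] [TotallyDisconnectedSpace G]
    (X : Type) [TopologicalSpace X] [CompactSpace X] [T2Space X]
    [TotallyDisconnectedSpace X]
    (S : X → Subgroup G) (hclosed : ∀ x, IsClosed (S x : Set G))
    (hidx : IsClosed {gx : G × X | gx.1 ∈ S gx.2})
    (F : Type) [Finite F] [TopologicalSpace F] [DiscreteTopology F]
    (f : {gx : G × X // gx.1 ∈ S gx.2} → F) (hf : Continuous f) :
    ∃ (U : Subgroup G), U.Normal ∧ IsOpen (U : Set G) ∧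
      ∃ (Y : Type) (_ : Finite Y) (π : X → Y),
        Function.Surjective π ∧
        (∀ y, IsClopen (π ⁻¹' {y})) ∧
        (∀ y, ∃ x, π x = y ∧
          ∀ x', π x' = y → (S x' : Set G) ⊆ (S x : Set G) * (U : Set G)) ∧
        (∀ (x x' : X) (s s' : G) (hs : s ∈ S x) (hs' : s' ∈ S x'),
          s⁻¹ * s' ∈ U → π x = π x' → f ⟨(s, x), hs⟩ = f ⟨(s', x'), hs'⟩) := by
  classical
  -- Step A: local constancy of `f` around each point of the sheaf space
  have stepA : ∀ z : {gx : G × X // gx.1 ∈ S gx.2},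
      ∃ (V : OpenNormalSubgroup G) (W : Set X), IsClopen W ∧ z.1.2 ∈ W ∧
        ∀ (g : G) (x : X) (h : g ∈ S x), z.1.1⁻¹ * g ∈ V → x ∈ W →
          f ⟨(g, x), h⟩ = f z := by
    intro z
    have hopen : IsOpen (f ⁻¹' {f z}) := (isOpen_discrete _).preimage hf
    have h1 : f ⁻¹' {f z} ∈ nhds z := hopen.mem_nhds rfl
    have hz : z = ⟨z.1, z.2⟩ := rfl
    rw [hz, nhds_subtype_eq_comap, Filter.mem_comap] at h1
    obtain ⟨O', hO', hsub⟩ := h1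
    obtain ⟨O, hOsub, hO, hzO⟩ := mem_nhds_iff.mp hO'
    obtain ⟨O₁, O₂, hO₁, hO₂, hsO₁, hxO₂, hprod⟩ := isOpen_prod_iff.mp hO z.1.1 z.1.2 hzO
    have h1m : (1 : G) ∈ (fun g => z.1.1 * g) ⁻¹' O₁ := by
      simpa using hsO₁
    have hpre : IsOpen ((fun g => z.1.1 * g) ⁻¹' O₁) :=
      hO₁.preimage (continuous_const.mul continuous_id)
    obtain ⟨C, hCclopen, h1C, hCsub⟩ := compact_exists_isClopen_in_isOpen hpre h1m
    obtain ⟨V, hV⟩ :=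
      IsTopologicalGroup.exist_openNormalSubgroup_sub_clopen_nhds_of_one hCclopen h1C
    obtain ⟨W, hWclopen, hxW, hWsub⟩ := compact_exists_isClopen_in_isOpen hO₂ hxO₂
    refine ⟨V, W, hWclopen, hxW, fun g x h hgV hxW' => ?_⟩
    have hgO₁ : g ∈ O₁ := by
      have h2 := hCsub (hV hgV)
      simpa [mul_inv_cancel_left] using h2
    have hmemO : ((g, x) : G × X) ∈ O' := hOsub (hprod ⟨hgO₁, hWsub hxW'⟩)
    exact hsub hmemO
  choose V W hWclopen hWmem hWspec using stepA
  -- compactness: finite subcover of the sheaf space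
  have hRopen : ∀ z : {gx : G × X // gx.1 ∈ S gx.2},
      IsOpen {gx : G × X | z.1.1⁻¹ * gx.1 ∈ V z ∧ gx.2 ∈ W z} := by
    intro z
    have heq : {gx : G × X | z.1.1⁻¹ * gx.1 ∈ V z ∧ gx.2 ∈ W z}
        = ((fun gx : G × X => z.1.1⁻¹ * gx.1) ⁻¹' ((V z : Subgroup G) : Set G))
          ∩ (Prod.snd ⁻¹' W z) := rfl
    rw [heq]
    exact ((V z).toOpenSubgroup.isOpen.preimage
      (continuous_const.mul continuous_fst)).inter ((hWclopen z).2.preimage continuous_snd)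
  have hcover : {gx : G × X | gx.1 ∈ S gx.2}
      ⊆ ⋃ z : {gx : G × X // gx.1 ∈ S gx.2},
        {gx : G × X | z.1.1⁻¹ * gx.1 ∈ V z ∧ gx.2 ∈ W z} := by
    intro gx hgx
    refine Set.mem_iUnion.mpr ⟨⟨gx, hgx⟩, ?_, hWmem _⟩
    simpa using one_mem (V ⟨gx, hgx⟩)
  obtain ⟨t, ht⟩ := hidx.isCompact.elim_finite_subcover _ hRopen hcover
  -- the open normal subgroup U
  set VS : {gx : G × X // gx.1 ∈ S gx.2} → Subgroup G :=
    fun z => (V z).toOpenSubgroup.toSubgroup with hVS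
  set U : Subgroup G := ⨅ z ∈ t, VS z with hU
  have hUle : ∀ z ∈ t, U ≤ VS z := fun z hz => iInf₂_le z hz
  have hUnormal : U.Normal := by
    constructor
    intro a ha g
    simp only [hU, Subgroup.mem_iInf] at ha ⊢
    intro z hz
    exact (V z).isNormal'.conj_mem a (ha z hz) g
  have hUopen : IsOpen (U : Set G) := by
    have heq : (U : Set G) = ⋂ z ∈ t, ((VS z : Subgroup G) : Set G) := by
      simp only [hU, Subgroup.coe_iInf]
    rw [heq]
    exact isOpen_biInter_finset fun z _ => (V z).toOpenSubgroup.isOpen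
  haveI hQfin : Finite (G ⧸ U) := U.quotient_finite_of_isOpen hUopen
  have hUclosed : IsClosed (U : Set G) := U.isClosed_of_isOpen hUopen
  -- the image map into the finite quotient
  set imgQ : X → Set (G ⧸ U) := fun x => QuotientGroup.mk '' (S x : Set G) with himgQ
  have hclosed_pre : ∀ T' : Set (G ⧸ U), IsClosed (QuotientGroup.mk ⁻¹' T' : Set G) := by
    intro T'
    have heq : (QuotientGroup.mk ⁻¹' T' : Set G)
        = ⋃ q ∈ T', QuotientGroup.mk ⁻¹' {q} := by
      ext g; simp
    rw [heq]
    refine (Set.toFinite T').isClosed_biUnion ?_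
    intro q _
    obtain ⟨g₀, rfl⟩ := QuotientGroup.mk_surjective q
    have heq2 : (QuotientGroup.mk ⁻¹' {(QuotientGroup.mk g₀ : G ⧸ U)} : Set G)
        = (fun g => g⁻¹ * g₀) ⁻¹' (U : Set G) := by
      ext g
      simp only [Set.mem_preimage, Set.mem_singleton_iff, SetLike.mem_coe]
      exact QuotientGroup.eq
    rw [heq2]
    exact hUclosed.preimage (continuous_inv.mul continuous_const)
  have hop : ∀ T : Set (G ⧸ U), IsOpen {x | imgQ x ⊆ T} := by
    intro T
    have heq : {x | imgQ x ⊆ T}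
        = {x : X | ∀ g ∈ S x, g ∉ (QuotientGroup.mk ⁻¹' Tᶜ : Set G)} := by
      ext x
      simp only [Set.mem_setOf_eq, himgQ, Set.image_subset_iff, Set.mem_preimage,
        Set.mem_compl_iff, SetLike.mem_coe]
      constructor
      · intro hsubT g hg hgc
        exact hgc (hsubT hg)
      · intro hT g hg
        by_contra hc
        exact hT g hg hc
    rw [heq]
    exact open_avoid S hidx (hclosed_pre Tᶜ)
  have hbasisX : ∀ (x : X) (O : Set X), IsOpen O → x ∈ O →
      ∃ Wc, IsClopen Wc ∧ x ∈ Wc ∧ Wc ⊆ O :=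
    fun x O hO hxO => compact_exists_isClopen_in_isOpen hO hxO
  -- the coarse partition from the cover
  set π₁ : X → (↥t → Bool) := fun x z => decide (x ∈ W z.1) with hπ₁def
  set A : (↥t → Bool) → Set X := fun y => π₁ ⁻¹' {y} with hAdef
  have hAmem : ∀ (x : X) (y : ↥t → Bool), x ∈ A y ↔ π₁ x = y := by
    intro x y
    simp [hAdef]
  have hAclopen : ∀ y, IsClopen (A y) := by
    intro y
    have hzc : ∀ z : ↥t, IsClopen (if y z then W z.1 else (W z.1)ᶜ) := by
      intro z
      cases hyz : y z
      · simpa [hyz] using (hWclopen z.1).compl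
      · simpa [hyz] using hWclopen z.1
    have heq : A y = ⋂ z : ↥t, (if y z then W z.1 else (W z.1)ᶜ) := by
      ext x
      simp only [hAdef, Set.mem_preimage, Set.mem_singleton_iff, funext_iff, hπ₁def,
        Set.mem_iInter]
      refine forall_congr' fun z => ?_
      cases hyz : y z
      · simp [hyz]
      · simp [hyz]
    rw [heq]
    exact ⟨isClosed_iInter fun z => (hzc z).1, isOpen_iInter_of_finite fun z => (hzc z).2⟩
  -- refine each coarse part
  have hpart : ∀ y : ↥t → Bool, ∃ PP : Finset (Set X),
      (∀ B ∈ PP, IsClopen B ∧ B.Nonempty ∧ ∃ x ∈ B, ∀ x' ∈ B, imgQ x' ⊆ imgQ x) ∧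
      ((PP : Set (Set X)).Pairwise Disjoint) ∧ ⋃₀ ↑PP = A y :=
    fun y => partition_lemma imgQ hop hbasisX
      ({q | ∃ x ∈ A y, q ∈ imgQ x}).ncard (A y) (hAclopen y) le_rfl
  choose PPf hPPprops hPPpair hPPunion using hpart
  haveI : Fintype (↥t → Bool) := Fintype.ofFinite _
  set PPtot : Finset (Set X) := Finset.univ.biUnion PPf with hPPtot
  have hsubA : ∀ (y : ↥t → Bool) (B : Set X), B ∈ PPf y → B ⊆ A y := by
    intro y B hB
    rw [← hPPunion y]
    exact Set.subset_sUnion_of_mem hB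
  have hprop' : ∀ B ∈ PPtot,
      IsClopen B ∧ B.Nonempty ∧ ∃ x ∈ B, ∀ x' ∈ B, imgQ x' ⊆ imgQ x := by
    intro B hB
    rw [hPPtot, Finset.mem_biUnion] at hB
    obtain ⟨y, _, hB⟩ := hB
    exact hPPprops y B hB
  have hcoverX : ∀ x : X, ∃ B, B ∈ PPtot ∧ x ∈ B := by
    intro x
    have hxA : x ∈ A (π₁ x) := (hAmem x (π₁ x)).mpr rfl
    rw [← hPPunion (π₁ x)] at hxA
    obtain ⟨B, hB, hxB⟩ := hxA
    exact ⟨B, by rw [hPPtot, Finset.mem_biUnion]; exact ⟨π₁ x, Finset.mem_univ _, hB⟩, hxB⟩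
  have hdisj : ∀ B ∈ PPtot, ∀ C ∈ PPtot, B ≠ C → Disjoint B C := by
    intro B hB C hC hne
    rw [hPPtot, Finset.mem_biUnion] at hB hC
    obtain ⟨y₁, _, hB⟩ := hB
    obtain ⟨y₂, _, hC⟩ := hC
    by_cases hy : y₁ = y₂
    · subst hy
      exact hPPpair y₁ hB hC hne
    · refine Set.disjoint_left.mpr fun x hxB hxC => ?_
      have h1 := (hAmem x y₁).mp (hsubA y₁ B hB hxB)
      have h2 := (hAmem x y₂).mp (hsubA y₂ C hC hxC)
      exact hy (h1 ▸ h2 ▸ rfl)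
  refine ⟨U, hUnormal, hUopen, {B : Set X // B ∈ PPtot}, inferInstance, ?_⟩
  set π : X → {B : Set X // B ∈ PPtot} :=
    fun x => ⟨(hcoverX x).choose, (hcoverX x).choose_spec.1⟩ with hπdef
  have hπx : ∀ x, x ∈ (π x).1 := fun x => (hcoverX x).choose_spec.2
  have hπeq : ∀ (x : X) (B : Set X) (hB : B ∈ PPtot), x ∈ B → π x = ⟨B, hB⟩ := by
    intro x B hB hxB
    by_contra hne
    have hne' : (π x).1 ≠ B := fun h => hne (Subtype.ext h)
    exact absurd hxB (Set.disjoint_left.mp (hdisj _ (π x).2 _ hB hne') (hπx x))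
  have hfib : ∀ y : {B : Set X // B ∈ PPtot}, π ⁻¹' {y} = y.1 := by
    intro y
    ext x
    simp only [Set.mem_preimage, Set.mem_singleton_iff]
    constructor
    · rintro rfl
      exact hπx x
    · intro hx
      exact hπeq x y.1 y.2 hx
  refine ⟨π, ?_, ?_, ?_, ?_⟩
  · intro y
    obtain ⟨x, hx⟩ := (hprop' y.1 y.2).2.1
    exact ⟨x, hπeq x y.1 y.2 hx⟩
  · intro y
    rw [hfib]
    exact (hprop' y.1 y.2).1
  · intro y
    obtain ⟨x, hxB, hmax⟩ := (hprop' y.1 y.2).2.2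
    refine ⟨x, hπeq x y.1 y.2 hxB, ?_⟩
    intro x' hπx' s' hs'
    have hx'B : x' ∈ y.1 := by
      rw [← hfib y]
      exact hπx'
    have hmk : (QuotientGroup.mk s' : G ⧸ U) ∈ imgQ x' := ⟨s', hs', rfl⟩
    obtain ⟨s, hsS, hmkeq⟩ := hmax x' hx'B hmk
    have hu : s⁻¹ * s' ∈ U := QuotientGroup.eq.mp hmkeq
    have : s * (s⁻¹ * s') = s' := mul_inv_cancel_left s s'
    rw [← this]
    exact Set.mul_mem_mul hsS hu
  · intro x x' s s' hs hs' hsU hππ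
    have hx'B : x' ∈ (π x).1 := by
      rw [hππ]
      exact hπx x'
    have hBmem : (π x).1 ∈ Finset.univ.biUnion PPf := (π x).2
    rw [Finset.mem_biUnion] at hBmem
    obtain ⟨y₀, _, hy₀⟩ := hBmem
    have hπ₁x : π₁ x = y₀ := (hAmem x y₀).mp (hsubA y₀ _ hy₀ (hπx x))
    have hπ₁x' : π₁ x' = y₀ := (hAmem x' y₀).mp (hsubA y₀ _ hy₀ hx'B)
    have hπ₁eq : π₁ x = π₁ x' := by rw [hπ₁x, hπ₁x']
    have hmem : ((s, x) : G × X) ∈ {gx : G × X | gx.1 ∈ S gx.2} := hs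
    have hmem2 := ht hmem
    rw [Set.mem_iUnion₂] at hmem2
    obtain ⟨z, hz, hsz, hxz⟩ := hmem2
    have h1 : f ⟨(s, x), hs⟩ = f z := hWspec z s x hs hsz hxz
    have hs'V : z.1.1⁻¹ * s' ∈ V z := by
      have h3 : s⁻¹ * s' ∈ VS z := hUle z hz hsU
      have h4 := mul_mem hsz h3
      rwa [mul_assoc, mul_inv_cancel_left] at h4
    have hx'W : x' ∈ W z := by
      have hd := congrFun hπ₁eq ⟨z, hz⟩
      simp only [hπ₁def] at hd
      rw [decide_eq_decide] at hd
      exact hd.mp hxz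
    have h2 : f ⟨(s', x'), hs'⟩ = f z := hWspec z s' x' hs' hs'V hx'W
    rw [h1, h2]
end

section
/- Let (G,𝒮) be a profinite group pair, let A be a finite abelian group with an action of G, and let 0 → A → E →^p G → 1 be a continuous extension of G by A (E a profinite group, p a continuous surjection with kernel A, the conjugation action of E on A inducing the given G-action). Let q : 𝒮 → E be a continuous map such that for each x ∈ X the map s ↦ q(s,x) is a homomorphism S_x → E with p(q(s,x)) = s, and let r : G → E be a continuous set-theoretic section of p with r(1) = 1. Define ζ : G × G → A by ζ(g₁,g₂) = r(g₁)r(g₂)r(g₁g₂)^{-1} and κ : 𝒮 → A by κ(s,x) = r(s)q(s,x)^{-1}. Then ζ and κ are continuous, and there exists a finite quotient (U,𝒯,Y) of 𝒮 such that ζ factors through the quotient map G × G → G/U × G/U and κ factors through the natural map 𝒮 → 𝒯. -/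
open Pointwise

/-- In a profinite group, every open neighborhood of 1 contains an open normal subgroup. -/
lemma zkaux_onsub {G : Type*} [Group G] [TopologicalSpace G] [IsTopologicalGroup G]
    [CompactSpace G] [T2Space G] [TotallyDisconnectedSpace G] {O : Set G}
    (hO : IsOpen O) (h1 : (1 : G) ∈ O) :
    ∃ U : Subgroup G, U.Normal ∧ IsOpen (U : Set G) ∧ (U : Set G) ⊆ O := by
  obtain ⟨W, hW, h1W, hWO⟩ := compact_exists_isClopen_in_isOpen hO h1
  obtain ⟨H, hH⟩ := IsTopologicalGroup.exist_openNormalSubgroup_sub_clopen_nhds_of_one hW h1W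
  exact ⟨H.toSubgroup, H.isNormal', H.toOpenSubgroup.isOpen, hH.trans hWO⟩

/-- A compact set inside an open set of a profinite space has a clopen set in between. -/
lemma zkaux_clopen_between {X : Type*} [TopologicalSpace X] [CompactSpace X] [T2Space X]
    [TotallyDisconnectedSpace X] {F O : Set X} (hF : IsClosed F) (hO : IsOpen O)
    (hFO : F ⊆ O) : ∃ C : Set X, IsClopen C ∧ F ⊆ C ∧ C ⊆ O := by
  have hx : ∀ x ∈ F, ∃ C : Set X, IsClopen C ∧ x ∈ C ∧ C ⊆ O := fun x hx =>
    compact_exists_isClopen_in_isOpen hO (hFO hx)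
  choose! C hCclopen hCmem hCsub using hx
  obtain ⟨t, hts, htfin, hcov⟩ := hF.isCompact.elim_finite_subcover_image
    (fun x hxF => (hCclopen x hxF).2) (fun x hxF => Set.mem_biUnion hxF (hCmem x hxF))
  exact ⟨⋃ x ∈ t, C x, htfin.isClopen_biUnion (fun i hi => hCclopen i (hts hi)), hcov,
    Set.iUnion₂_subset fun i hi => hCsub i (hts hi)⟩

/-- Local constancy of a continuous map with values in a finite set. -/
lemma zkaux_locconst {Z E : Type*} [TopologicalSpace Z] [TopologicalSpace E] [T1Space E]
    {f : Z → E} (hf : Continuous f) {K : Set E} (hK : K.Finite) (hfK : ∀ z, f z ∈ K)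
    (z : Z) : IsOpen (f ⁻¹' {f z}) := by
  have he : f ⁻¹' {f z} = f ⁻¹' ((K \ {f z})ᶜ) := by
    ext w
    simp only [Set.mem_preimage, Set.mem_singleton_iff, Set.mem_compl_iff, Set.mem_diff,
      not_and, not_not]
    exact ⟨fun h _ => h, fun h => h (hfK w)⟩
  rw [he]
  exact ((hK.diff (t := {f z})).isClosed.isOpen_compl).preimage hf

/-- Finite intersections of open normal subgroups contain an open normal subgroup. -/
lemma zkaux_finsetInf {G : Type*} [Group G] [TopologicalSpace G] {ι : Type*}
    (t : Finset ι) (N : ι → Subgroup G) (hnorm : ∀ i, (N i).Normal)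
    (hopen : ∀ i, IsOpen (N i : Set G)) :
    ∃ U : Subgroup G, U.Normal ∧ IsOpen (U : Set G) ∧ ∀ i ∈ t, U ≤ N i := by
  classical
  induction t using Finset.induction with
  | empty => exact ⟨⊤, inferInstance, by simp, by simp⟩
  | @insert a s ha ih =>
      obtain ⟨U, hUn, hUo, hUle⟩ := ih
      refine ⟨U ⊓ N a, ?_, hUo.inter (hopen a), ?_⟩
      · constructor
        intro n hn g
        have hn' := Subgroup.mem_inf.mp hn
        exact Subgroup.mem_inf.mpr ⟨hUn.conj_mem n hn'.1 g, (hnorm a).conj_mem n hn'.2 g⟩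
      · intro i hi
        rcases Finset.mem_insert.mp hi with h | h
        · subst h; exact inf_le_right
        · exact inf_le_left.trans (hUle i h)


/-- Closedness of `{x | c ∈ mk '' S x}`. -/
lemma zkaux_mem_closed {G X : Type*} [Group G] [TopologicalSpace G] [IsTopologicalGroup G]
    [CompactSpace G] [T2Space G]
    [TopologicalSpace X] [CompactSpace X] [T2Space X]
    (S : X → Subgroup G) (hidx : IsClosed {gx : G × X | gx.1 ∈ S gx.2})
    (U : Subgroup G) (hUopen : IsOpen (U : Set G)) (c : G ⧸ U) :
    IsClosed {x : X | c ∈ (QuotientGroup.mk '' (S x : Set G) : Set (G ⧸ U))} := by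
  obtain ⟨g, rfl⟩ := QuotientGroup.mk_surjective c
  have hset : {x : X | (QuotientGroup.mk g : G ⧸ U) ∈
      (QuotientGroup.mk '' (S x : Set G) : Set (G ⧸ U))} =
      Prod.snd '' ({gx : G × X | gx.1 ∈ S gx.2} ∩ {gx : G × X | g⁻¹ * gx.1 ∈ U}) := by
    ext x
    simp only [Set.mem_setOf_eq, Set.mem_image, Set.mem_inter_iff, Prod.exists]
    constructor
    · rintro ⟨s, hs, hsg⟩
      exact ⟨s, x, ⟨hs, (QuotientGroup.eq).mp hsg.symm⟩, rfl⟩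
    · rintro ⟨s, x', ⟨hs, hgu⟩, rfl⟩
      exact ⟨s, hs, ((QuotientGroup.eq).mpr hgu).symm⟩
  rw [hset]
  have hcl : IsClosed ({gx : G × X | gx.1 ∈ S gx.2} ∩ {gx : G × X | g⁻¹ * gx.1 ∈ U}) := by
    refine hidx.inter ?_
    have : IsClosed ((fun gx : G × X => g⁻¹ * gx.1) ⁻¹' (U : Set G)) :=
      (U.isClosed_of_isOpen hUopen).preimage (continuous_const.mul continuous_fst)
    exact this
  exact (hcl.isCompact.image continuous_snd).isClosed

/-- **Partition lemma**: a clopen subset of `X` can be partitioned into clopen pieces each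
having a point dominating all subgroups of the piece modulo `U`. -/
lemma zkaux_partition {G X : Type*} [Group G] [TopologicalSpace G] [IsTopologicalGroup G]
    [CompactSpace G] [T2Space G]
    [TopologicalSpace X] [CompactSpace X] [T2Space X] [TotallyDisconnectedSpace X]
    (S : X → Subgroup G) (hidx : IsClosed {gx : G × X | gx.1 ∈ S gx.2})
    (U : Subgroup G) (hUopen : IsOpen (U : Set G)) :
    ∀ (n : ℕ) (P : Set X), IsClopen P →
      {V : Set (G ⧸ U) | ∃ x ∈ P, (QuotientGroup.mk '' (S x : Set G) : Set (G ⧸ U)) = V}.ncard ≤ n →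
      ∃ 𝒬 : Finset (Set X),
        (∀ A ∈ 𝒬, IsClopen A ∧ A.Nonempty) ∧
        ((𝒬 : Set (Set X)).Pairwise Disjoint) ∧
        ⋃₀ (𝒬 : Set (Set X)) = P ∧
        ∀ A ∈ 𝒬, ∃ x ∈ A, ∀ x' ∈ A, (S x' : Set G) ⊆ (S x : Set G) * (U : Set G) := by
  classical
  have hfinq : Finite (G ⧸ U) := U.quotient_finite_of_isOpen hUopen
  intro n
  induction n with
  | zero =>
      intro P hP hcard
      refine ⟨∅, by simp, by simp, ?_, by simp⟩
      simp only [Finset.coe_empty, Set.sUnion_empty]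
      by_contra h
      obtain ⟨x, hx⟩ := Set.nonempty_iff_ne_empty.mpr (Ne.symm h)
      have : {V : Set (G ⧸ U) | ∃ x ∈ P, (QuotientGroup.mk '' (S x : Set G) : Set (G ⧸ U)) = V}.Nonempty := ⟨(QuotientGroup.mk '' (S x : Set G) : Set (G ⧸ U)), x, hx, rfl⟩
      have := Set.ncard_pos (Set.toFinite _) |>.mpr this
      omega
  | succ n ih =>
      intro P hP hcard
      rcases Set.eq_empty_or_nonempty P with hPe | ⟨x₁, hx₁⟩
      · refine ⟨∅, by simp, by simp, ?_, by simp⟩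
        simp [hPe]
      · -- value set
        set VS : Set (Set (G ⧸ U)) := {V | ∃ x ∈ P, (QuotientGroup.mk '' (S x : Set G) : Set (G ⧸ U)) = V} with hVS
        have hVSfin : VS.Finite := Set.toFinite _
        have hVSne : VS.Nonempty := ⟨(QuotientGroup.mk '' (S x₁ : Set G) : Set (G ⧸ U)), x₁, hx₁, rfl⟩
        obtain ⟨T, hTmem, hTmax⟩ : ∃ T ∈ VS, ∀ T' ∈ VS, id T ≤ id T' → id T = id T' := by
            obtain ⟨T, hT, hm⟩ := hVSfin.exists_maximalFor id VS hVSne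
            exact ⟨T, hT, fun T' h1 h2 => le_antisymm h2 (hm h1 h2)⟩
        obtain ⟨x₀, hx₀P, hx₀T⟩ := hTmem
        have hTmem : T ∈ VS := ⟨x₀, hx₀P, hx₀T⟩
        -- closed set F and open set O
        set F : Set X := P ∩ ⋂ c ∈ T, {x | c ∈ (QuotientGroup.mk '' (S x : Set G) : Set (G ⧸ U))} with hF
        set O : Set X := P ∩ {x | (QuotientGroup.mk '' (S x : Set G) : Set (G ⧸ U)) ⊆ T} with hO
        have hFclosed : IsClosed F :=
          hP.isClosed.inter (isClosed_biInter fun c _ =>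
            zkaux_mem_closed S hidx U hUopen c)
        have hOopen : IsOpen O := by
          refine hP.isOpen.inter ?_
          have : {x : X | (QuotientGroup.mk '' (S x : Set G) : Set (G ⧸ U)) ⊆ T} = (⋃ c ∈ Tᶜ, {x | c ∈ (QuotientGroup.mk '' (S x : Set G) : Set (G ⧸ U))})ᶜ := by
            ext x
            simp only [Set.mem_setOf_eq, Set.mem_compl_iff, Set.mem_iUnion]
            constructor
            · rintro h ⟨c, hc, hcx⟩; exact hc (h hcx)
            · intro h c hc; by_contra hcT; exact h ⟨c, hcT, hc⟩
          rw [this]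
          exact (Set.Finite.isClosed_biUnion (Set.toFinite _)
            (fun c _ => zkaux_mem_closed S hidx U hUopen c)).isOpen_compl
        have hFO : F ⊆ O := by
          rintro x ⟨hxP, hxT⟩
          refine ⟨hxP, ?_⟩
          have hTsub : T ⊆ (QuotientGroup.mk '' (S x : Set G) : Set (G ⧸ U)) := by
            intro c hc
            exact (Set.mem_iInter₂.mp hxT) c hc
          have hDx : (QuotientGroup.mk '' (S x : Set G) : Set (G ⧸ U)) ∈ VS := ⟨x, hxP, rfl⟩
          have := hTmax ((QuotientGroup.mk '' (S x : Set G) : Set (G ⧸ U))) hDx hTsub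
          simp only [id] at this
          simp only [Set.mem_setOf_eq, ← this]
          exact subset_rfl
        obtain ⟨C, hCclopen, hFC, hCO⟩ := zkaux_clopen_between hFclosed hOopen hFO
        have hx₀F : x₀ ∈ F := by
          refine ⟨hx₀P, Set.mem_iInter₂.mpr fun c hc => ?_⟩
          rw [← hx₀T] at hc; exact hc
        -- C is a good piece
        have hCP : C ⊆ P := hCO.trans (Set.inter_subset_left)
        have hCdom : ∀ x' ∈ C, (S x' : Set G) ⊆ (S x₀ : Set G) * (U : Set G) := by
          intro x' hx' s' hs'
          have hDx' : (QuotientGroup.mk '' (S x' : Set G) : Set (G ⧸ U)) ⊆ T := (hCO hx').2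
          have : (QuotientGroup.mk s' : G ⧸ U) ∈ (QuotientGroup.mk '' (S x₀ : Set G) : Set (G ⧸ U)) := by
            rw [hx₀T]; exact hDx' ⟨s', hs', rfl⟩
          obtain ⟨s, hs, hss'⟩ := this
          have hu : s⁻¹ * s' ∈ U := (QuotientGroup.eq).mp hss'
          exact Set.mem_mul.mpr ⟨s, hs, s⁻¹ * s', hu, by group⟩
        -- recurse on P \ C
        have hP' : IsClopen (P \ C) := hP.diff hCclopen
        have hcard' : {V : Set (G ⧸ U) | ∃ x ∈ P \ C, (QuotientGroup.mk '' (S x : Set G) : Set (G ⧸ U)) = V}.ncard ≤ n := by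
          have hsub : {V : Set (G ⧸ U) | ∃ x ∈ P \ C, (QuotientGroup.mk '' (S x : Set G) : Set (G ⧸ U)) = V} ⊆ VS \ {T} := by
            rintro V ⟨x, ⟨hxP, hxC⟩, rfl⟩
            refine ⟨⟨x, hxP, rfl⟩, ?_⟩
            simp only [Set.mem_singleton_iff]
            intro hDxT
            apply hxC
            apply hFC
            refine ⟨hxP, Set.mem_iInter₂.mpr fun c hc => ?_⟩
            rw [← hDxT] at hc; exact hc
          have h1 : {V : Set (G ⧸ U) | ∃ x ∈ P \ C, (QuotientGroup.mk '' (S x : Set G) : Set (G ⧸ U)) = V}.ncard ≤ (VS \ {T}).ncard :=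
            Set.ncard_le_ncard hsub (Set.toFinite _)
          have h2 : (VS \ {T}).ncard < VS.ncard :=
            Set.ncard_diff_singleton_lt_of_mem hTmem hVSfin
          have h3 : VS.ncard ≤ n + 1 := hcard
          omega
        obtain ⟨𝒬, h1, h2, h3, h4⟩ := ih (P \ C) hP' hcard'
        have hCnotmem : ∀ A ∈ 𝒬, A ≠ C := by
          intro A hA
          have hAsub : A ⊆ P \ C := h3 ▸ Set.subset_sUnion_of_mem (by exact_mod_cast hA)
          obtain ⟨a, ha⟩ := (h1 A hA).2
          intro hAC
          exact (hAsub ha).2 (hAC ▸ ha)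
        refine ⟨insert C 𝒬, ?_, ?_, ?_, ?_⟩
        · intro A hA
          rcases Finset.mem_insert.mp hA with h | h
          · exact h ▸ ⟨hCclopen, ⟨x₀, hFC hx₀F⟩⟩
          · exact h1 A h
        · rw [Finset.coe_insert]
          refine Set.Pairwise.insert h2 ?_
          intro A hA hACne
          have hAsub : A ⊆ P \ C := h3 ▸ Set.subset_sUnion_of_mem (by exact_mod_cast hA)
          have hd : Disjoint C A := by
            rw [Set.disjoint_left]
            intro a haC haA
            exact (hAsub haA).2 haC
          exact ⟨hd, hd.symm⟩
        · rw [Finset.coe_insert, Set.sUnion_insert, h3]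
          rw [Set.union_diff_cancel hCP]
        · intro A hA
          rcases Finset.mem_insert.mp hA with h | h
          · exact h ▸ ⟨x₀, hFC hx₀F, hCdom⟩
          · exact h4 A h

/-- Let `(G,𝒮)` be a profinite group pair, `A` a finite abelian group
with `G`-action, realised as the kernel of a continuous extension `0 → A → E → G → 1` of
profinite groups, with the `G`-action induced by conjugation in `E`.  Given continuous
splittings `q : 𝒮 → E` and a continuous set-theoretic section `r : G → E` of `p` with
`r 1 = 1`, the maps `ζ(g₁,g₂) = r g₁ * r g₂ * (r(g₁g₂))⁻¹` and `κ(s,x) = r s * q(s,x)⁻¹`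
are continuous, and there is a finite quotient `(U,𝒯,Y)` of `𝒮` such that `ζ` factors
through `G/U × G/U` and `κ` factors through the natural map `𝒮 → 𝒯`. -/
theorem zeta_kappa_factor_through_finite_quotient
    (G : Type) [Group G] [TopologicalSpace G] [IsTopologicalGroup G]
    [CompactSpace G] [T2Space G] [TotallyDisconnectedSpace G]
    (X : Type) [TopologicalSpace X] [CompactSpace X] [T2Space X]
    [TotallyDisconnectedSpace X]
    (S : X → Subgroup G) (hclosed : ∀ x, IsClosed (S x : Set G))
    (hidx : IsClosed {gx : G × X | gx.1 ∈ S gx.2})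
    (E : Type) [Group E] [TopologicalSpace E] [IsTopologicalGroup E]
    [CompactSpace E] [T2Space E] [TotallyDisconnectedSpace E]
    (p : E →* G) (hpc : Continuous p) (hps : Function.Surjective p)
    (hker_fin : Finite p.ker) (hker_ab : ∀ a b : p.ker, a * b = b * a)
    (ρ : G →* MulAut p.ker)
    (hρ : ∀ (g : G) (a : p.ker) (e : E), p e = g → ((ρ g a : p.ker) : E) = e * ↑a * e⁻¹)
    (q : {gx : G × X // gx.1 ∈ S gx.2} → E) (hqc : Continuous q)
    (hqmul : ∀ (x : X) (s s' : G) (hs : s ∈ S x) (hs' : s' ∈ S x),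
        q ⟨(s * s', x), mul_mem hs hs'⟩ = q ⟨(s, x), hs⟩ * q ⟨(s', x), hs'⟩)
    (hqp : ∀ (x : X) (s : G) (hs : s ∈ S x), p (q ⟨(s, x), hs⟩) = s)
    (r : G → E) (hrc : Continuous r) (hrp : ∀ g, p (r g) = g) (hr1 : r 1 = 1) :
    Continuous (fun gg : G × G => r gg.1 * r gg.2 * (r (gg.1 * gg.2))⁻¹) ∧
    Continuous (fun sx : {gx : G × X // gx.1 ∈ S gx.2} => r sx.1.1 * (q sx)⁻¹) ∧
    ∃ (U : Subgroup G), U.Normal ∧ IsOpen (U : Set G) ∧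
      ∃ (Y : Type) (_ : Finite Y) (π : X → Y),
        Function.Surjective π ∧
        (∀ y, IsClopen (π ⁻¹' {y})) ∧
        (∀ y, ∃ x, π x = y ∧
          ∀ x', π x' = y → (S x' : Set G) ⊆ (S x : Set G) * (U : Set G)) ∧
        (∀ g₁ g₂ g₁' g₂' : G, g₁⁻¹ * g₁' ∈ U → g₂⁻¹ * g₂' ∈ U →
          r g₁ * r g₂ * (r (g₁ * g₂))⁻¹ = r g₁' * r g₂' * (r (g₁' * g₂'))⁻¹) ∧
        (∀ (x x' : X) (s s' : G) (hs : s ∈ S x) (hs' : s' ∈ S x'),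
          s⁻¹ * s' ∈ U → π x = π x' →
          r s * (q ⟨(s, x), hs⟩)⁻¹ = r s' * (q ⟨(s', x'), hs'⟩)⁻¹) := by
  classical
  have hker_fin' := hker_fin
  set ζ : G × G → E := fun gg => r gg.1 * r gg.2 * (r (gg.1 * gg.2))⁻¹ with hζ
  set κ : {gx : G × X // gx.1 ∈ S gx.2} → E := fun sx => r sx.1.1 * (q sx)⁻¹ with hκ
  have hζc : Continuous ζ :=
    ((hrc.comp continuous_fst).mul (hrc.comp continuous_snd)).mul
      ((hrc.comp (continuous_fst.mul continuous_snd)).inv)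
  have hκc : Continuous κ :=
    (hrc.comp (continuous_fst.comp continuous_subtype_val)).mul hqc.inv
  refine ⟨hζc, hκc, ?_⟩
  have hkerfinset : ((p.ker : Set E)).Finite := Set.toFinite _
  have hζker : ∀ w : G × G, ζ w ∈ (p.ker : Set E) := by
    intro w
    have : p (ζ w) = 1 := by
      simp only [hζ, map_mul, map_inv, hrp]
      group
    simpa [MonoidHom.mem_ker] using this
  have hκker : ∀ z : {gx : G × X // gx.1 ∈ S gx.2}, κ z ∈ (p.ker : Set E) := by
    rintro ⟨⟨s, x⟩, hs⟩
    have h1 : p (q ⟨(s, x), hs⟩) = s := hqp x s hs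
    have : p (κ ⟨(s, x), hs⟩) = 1 := by
      simp only [hκ, map_mul, map_inv, hrp, h1]
      group
    simpa [MonoidHom.mem_ker] using this
  -- ζ boxes
  have hζbox : ∀ z : G × G, ∃ N : Subgroup G, N.Normal ∧ IsOpen (N : Set G) ∧
      ∀ w : G × G, z.1⁻¹ * w.1 ∈ N → z.2⁻¹ * w.2 ∈ N → ζ w = ζ z := by
    intro z
    have hopen := zkaux_locconst hζc hkerfinset hζker z
    obtain ⟨O₁, O₂, hO₁, hO₂, hz1, hz2, hsub⟩ :=
      isOpen_prod_iff.mp hopen z.1 z.2 rfl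
    obtain ⟨N₁, hN₁n, hN₁o, hN₁s⟩ :=
      zkaux_onsub (hO₁.preimage (continuous_mul_left z.1)) (by simpa using hz1)
    obtain ⟨N₂, hN₂n, hN₂o, hN₂s⟩ :=
      zkaux_onsub (hO₂.preimage (continuous_mul_left z.2)) (by simpa using hz2)
    refine ⟨N₁ ⊓ N₂, ⟨fun n hn g => Subgroup.mem_inf.mpr
      ⟨hN₁n.conj_mem n (Subgroup.mem_inf.mp hn).1 g,
       hN₂n.conj_mem n (Subgroup.mem_inf.mp hn).2 g⟩⟩, hN₁o.inter hN₂o, ?_⟩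
    intro w h1 h2
    have hw1 : w.1 ∈ O₁ := by
      have := hN₁s (Subgroup.mem_inf.mp h1).1
      simpa [mul_inv_cancel_left] using this
    have hw2 : w.2 ∈ O₂ := by
      have := hN₂s (Subgroup.mem_inf.mp h2).2
      simpa [mul_inv_cancel_left] using this
    exact hsub (Set.mem_prod.mpr ⟨hw1, hw2⟩)
  choose N hNn hNo hNs using hζbox
  set B : G × G → Set (G × G) := fun z => {w | z.1⁻¹ * w.1 ∈ N z ∧ z.2⁻¹ * w.2 ∈ N z}
    with hB
  have hBopen : ∀ z, IsOpen (B z) := fun z =>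
    (((hNo z).preimage (continuous_const.mul continuous_fst)).inter
      ((hNo z).preimage (continuous_const.mul continuous_snd)))
  have hBcov : (Set.univ : Set (G × G)) ⊆ ⋃ z, B z := fun z _ =>
    Set.mem_iUnion.mpr ⟨z, ⟨by simpa using (N z).one_mem, by simpa using (N z).one_mem⟩⟩
  obtain ⟨t₁, ht₁⟩ := isCompact_univ.elim_finite_subcover B hBopen hBcov
  -- κ boxes
  have hScomp : CompactSpace {gx : G × X // gx.1 ∈ S gx.2} :=
    isCompact_iff_compactSpace.mp hidx.isCompact
  have hκbox : ∀ z : {gx : G × X // gx.1 ∈ S gx.2}, ∃ (N' : Subgroup G) (C : Set X),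
      N'.Normal ∧ IsOpen (N' : Set G) ∧ IsClopen C ∧ z.1.2 ∈ C ∧
      ∀ w : {gx : G × X // gx.1 ∈ S gx.2}, z.1.1⁻¹ * w.1.1 ∈ N' → w.1.2 ∈ C → κ w = κ z := by
    intro z
    have hopen := zkaux_locconst hκc hkerfinset hκker z
    obtain ⟨O, hOopen, hOeq⟩ := isOpen_induced_iff.mp hopen
    have hzO : (z : G × X) ∈ O := by
      have : z ∈ Subtype.val ⁻¹' O := by rw [hOeq]; exact rfl
      exact this
    obtain ⟨O₁, O₂, hO₁, hO₂, hz1, hz2, hsub⟩ :=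
      isOpen_prod_iff.mp hOopen z.1.1 z.1.2 hzO
    obtain ⟨N₁, hN₁n, hN₁o, hN₁s⟩ :=
      zkaux_onsub (hO₁.preimage (continuous_mul_left z.1.1)) (by simpa using hz1)
    obtain ⟨C, hCcl, hzC, hCsub⟩ := compact_exists_isClopen_in_isOpen hO₂ hz2
    refine ⟨N₁, C, hN₁n, hN₁o, hCcl, hzC, ?_⟩
    intro w h1 h2
    have hw1 : w.1.1 ∈ O₁ := by
      have := hN₁s h1
      simpa [mul_inv_cancel_left] using this
    have hwO : (w : G × X) ∈ O := hsub (Set.mem_prod.mpr ⟨hw1, hCsub h2⟩)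
    have : w ∈ κ ⁻¹' {κ z} := by rw [← hOeq]; exact hwO
    exact this
  choose N' C hN'n hN'o hCc hCz hCs using hκbox
  set B' : {gx : G × X // gx.1 ∈ S gx.2} → Set {gx : G × X // gx.1 ∈ S gx.2} :=
    fun z => {w | z.1.1⁻¹ * w.1.1 ∈ N' z ∧ w.1.2 ∈ C z} with hB'
  have hB'open : ∀ z, IsOpen (B' z) := by
    intro z
    have he : B' z = Subtype.val ⁻¹'
        ({gx : G × X | z.1.1⁻¹ * gx.1 ∈ N' z} ∩ {gx : G × X | gx.2 ∈ C z}) := rfl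
    rw [he]
    exact (((hN'o z).preimage (continuous_const.mul continuous_fst)).inter
      ((hCc z).2.preimage continuous_snd)).preimage continuous_subtype_val
  have hB'cov : (Set.univ : Set {gx : G × X // gx.1 ∈ S gx.2}) ⊆ ⋃ z, B' z := fun z _ =>
    Set.mem_iUnion.mpr ⟨z, ⟨by simpa using (N' z).one_mem, hCz z⟩⟩
  obtain ⟨t₂, ht₂⟩ := isCompact_univ.elim_finite_subcover B' hB'open hB'cov
  -- combine to a single open normal subgroup U
  obtain ⟨U₁, hU₁n, hU₁o, hU₁le⟩ := zkaux_finsetInf t₁ N hNn hNo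
  obtain ⟨U₂, hU₂n, hU₂o, hU₂le⟩ := zkaux_finsetInf t₂ N' hN'n hN'o
  set U : Subgroup G := U₁ ⊓ U₂ with hU
  have hUn : U.Normal := ⟨fun n hn g => Subgroup.mem_inf.mpr
    ⟨hU₁n.conj_mem _ (Subgroup.mem_inf.mp hn).1 g,
     hU₂n.conj_mem _ (Subgroup.mem_inf.mp hn).2 g⟩⟩
  have hUo : IsOpen (U : Set G) := hU₁o.inter hU₂o
  refine ⟨U, hUn, hUo, ?_⟩
  -- the partition of X
  set Rv : (↥t₂ → Bool) → Set X := fun v => {x | ∀ z : ↥t₂, x ∈ C z.1 ↔ v z = true}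
    with hRv
  have hRclopen : ∀ v, IsClopen (Rv v) := by
    intro v
    have he : Rv v = ⋂ z : ↥t₂, {x | x ∈ C z.1 ↔ v z = true} := by
      ext x; simp [hRv, Set.mem_iInter]
    rw [he]
    refine isClopen_iInter_of_finite fun z => ?_
    by_cases h : v z = true
    · have he2 : {x | x ∈ C z.1 ↔ v z = true} = C z.1 := by ext x; simp [h]
      rw [he2]; exact hCc z.1
    · have he2 : {x | x ∈ C z.1 ↔ v z = true} = (C z.1)ᶜ := by ext x; simp [h]
      rw [he2]; exact (hCc z.1).compl
  have hpart := fun v : ↥t₂ → Bool => zkaux_partition S hidx U hUo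
    ({V : Set (G ⧸ U) | ∃ x ∈ Rv v, (QuotientGroup.mk '' (S x : Set G) : Set (G ⧸ U)) = V}.ncard)
    (Rv v) (hRclopen v) le_rfl
  choose 𝒬 hQ1 hQ2 hQ3 hQ4 using hpart
  set PP : Finset (Set X) := Finset.univ.biUnion 𝒬 with hPP
  have hmemPP : ∀ A : Set X, A ∈ PP ↔ ∃ v, A ∈ 𝒬 v := by
    intro A
    simp [hPP, Finset.mem_biUnion]
  have hAsubR : ∀ (v) (A : Set X), A ∈ 𝒬 v → A ⊆ Rv v := by
    intro v A hA
    rw [← hQ3 v]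
    exact Set.subset_sUnion_of_mem (by exact_mod_cast hA)
  have hRdisj : ∀ v v', v ≠ v' → Disjoint (Rv v) (Rv v') := by
    intro v v' hne
    rw [Set.disjoint_left]
    intro x hx hx'
    apply hne
    funext z
    have h1 : x ∈ C z.1 ↔ v z = true := hx z
    have h2 : x ∈ C z.1 ↔ v' z = true := hx' z
    by_cases hc : x ∈ C z.1
    · rw [h1.mp hc, h2.mp hc]
    · cases hvz : v z with
      | true => exact absurd (h1.mpr hvz) hc
      | false =>
        cases hvz' : v' z with
        | true => exact absurd (h2.mpr hvz') hc
        | false => rfl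
  have hPPdisj : ∀ A ∈ PP, ∀ A' ∈ PP, A ≠ A' → Disjoint A A' := by
    intro A hA A' hA' hne
    obtain ⟨v, hv⟩ := (hmemPP A).mp hA
    obtain ⟨v', hv'⟩ := (hmemPP A').mp hA'
    by_cases hvv : v = v'
    · subst hvv
      exact hQ2 v (by exact_mod_cast hv) (by exact_mod_cast hv') hne
    · exact Set.disjoint_of_subset (hAsubR v A hv) (hAsubR v' A' hv') (hRdisj v v' hvv)
  have hex : ∀ x : X, ∃ A : Set X, A ∈ PP ∧ x ∈ A := by
    intro x
    have hxR : x ∈ Rv (fun z => decide (x ∈ C z.1)) := by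
      simp only [hRv, Set.mem_setOf_eq, decide_eq_true_eq]
      exact fun z => trivial
    rw [← hQ3 (fun z => decide (x ∈ C z.1))] at hxR
    obtain ⟨A, hA, hxA⟩ := Set.mem_sUnion.mp hxR
    exact ⟨A, (hmemPP A).mpr ⟨_, by exact_mod_cast hA⟩, hxA⟩
  let Yt := {A : Set X // A ∈ PP}
  let π : X → Yt := fun x => ⟨(hex x).choose, (hex x).choose_spec.1⟩
  have hπmem : ∀ x, x ∈ (π x).1 := fun x => (hex x).choose_spec.2
  have hπuniq : ∀ x A, A ∈ PP → x ∈ A → (π x).1 = A := by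
    intro x A hA hxA
    by_contra hne
    exact Set.disjoint_left.mp (hPPdisj _ (π x).2 _ hA hne) (hπmem x) hxA
  have hfib : ∀ y : Yt, π ⁻¹' {y} = y.1 := by
    intro y
    ext x
    simp only [Set.mem_preimage, Set.mem_singleton_iff]
    constructor
    · rintro rfl; exact hπmem x
    · intro hx; exact Subtype.ext (hπuniq x y.1 y.2 hx)
  refine ⟨Yt, Finite.of_fintype _, π, ?_, ?_, ?_, ?_, ?_⟩
  · rintro ⟨A, hA⟩
    obtain ⟨v, hv⟩ := (hmemPP A).mp hA
    obtain ⟨x, hx⟩ := (hQ1 v A hv).2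
    exact ⟨x, Subtype.ext (hπuniq x A hA hx)⟩
  · intro y
    rw [hfib y]
    obtain ⟨v, hv⟩ := (hmemPP y.1).mp y.2
    exact (hQ1 v y.1 hv).1
  · rintro ⟨A, hA⟩
    obtain ⟨v, hv⟩ := (hmemPP A).mp hA
    obtain ⟨x, hxA, hdom⟩ := hQ4 v A hv
    refine ⟨x, Subtype.ext (hπuniq x A hA hxA), ?_⟩
    intro x' hx'
    have hx'A : x' ∈ A := by
      have he : (π x').1 = A := congrArg Subtype.val hx'
      rw [← he]; exact hπmem x'
    exact hdom x' hx'A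
  · intro g₁ g₂ g₁' g₂' h1 h2
    have hmem : (g₁, g₂) ∈ ⋃ z ∈ t₁, B z := ht₁ (Set.mem_univ _)
    obtain ⟨z, hz, hzB⟩ := Set.mem_iUnion₂.mp hmem
    have hzB' : z.1⁻¹ * g₁ ∈ N z ∧ z.2⁻¹ * g₂ ∈ N z := hzB
    have e1 : z.1⁻¹ * g₁' ∈ N z := by
      have he : z.1⁻¹ * g₁' = (z.1⁻¹ * g₁) * (g₁⁻¹ * g₁') := by group
      rw [he]
      exact mul_mem hzB'.1 (hU₁le z hz (Subgroup.mem_inf.mp h1).1)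
    have e2 : z.2⁻¹ * g₂' ∈ N z := by
      have he : z.2⁻¹ * g₂' = (z.2⁻¹ * g₂) * (g₂⁻¹ * g₂') := by group
      rw [he]
      exact mul_mem hzB'.2 (hU₁le z hz (Subgroup.mem_inf.mp h2).1)
    have hζ1 : ζ (g₁, g₂) = ζ z := hNs z (g₁, g₂) hzB'.1 hzB'.2
    have hζ2 : ζ (g₁', g₂') = ζ z := hNs z (g₁', g₂') e1 e2
    show ζ (g₁, g₂) = ζ (g₁', g₂')
    rw [hζ1, hζ2]
  · intro x x' s s' hs hs' hU' hππ
    have hmem : (⟨(s, x), hs⟩ : {gx : G × X // gx.1 ∈ S gx.2}) ∈ ⋃ z ∈ t₂, B' z :=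
      ht₂ (Set.mem_univ _)
    obtain ⟨z, hz, hzB⟩ := Set.mem_iUnion₂.mp hmem
    have hzB' : z.1.1⁻¹ * s ∈ N' z ∧ x ∈ C z := hzB
    obtain ⟨v, hv⟩ := (hmemPP (π x).1).mp (π x).2
    have hxA : x ∈ (π x).1 := hπmem x
    have hx'A : x' ∈ (π x).1 := by
      have he : (π x').1 = (π x).1 := congrArg Subtype.val hππ.symm
      rw [← he]; exact hπmem x'
    have hxR : x ∈ Rv v := hAsubR v (π x).1 hv hxA
    have hx'R : x' ∈ Rv v := hAsubR v (π x).1 hv hx'A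
    have hx'C : x' ∈ C z := by
      have hb : v ⟨z, hz⟩ = true := (hxR ⟨z, hz⟩).mp hzB'.2
      exact (hx'R ⟨z, hz⟩).mpr hb
    have e1 : z.1.1⁻¹ * s' ∈ N' z := by
      have he : z.1.1⁻¹ * s' = (z.1.1⁻¹ * s) * (s⁻¹ * s') := by group
      rw [he]
      exact mul_mem hzB'.1 (hU₂le z hz (Subgroup.mem_inf.mp hU').2)
    have hκ1 : κ ⟨(s, x), hs⟩ = κ z := hCs z ⟨(s, x), hs⟩ hzB'.1 hzB'.2
    have hκ2 : κ ⟨(s', x'), hs'⟩ = κ z := hCs z ⟨(s', x'), hs'⟩ e1 hx'C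
    show κ ⟨(s, x), hs⟩ = κ ⟨(s', x'), hs'⟩
    rw [hκ1, hκ2]
end

section
/- Let p be a prime, H a profinite group, and K a finite normal subgroup of H such that H/K is a pro-p group. Let P be a closed pro-p subgroup of H with PK = H and with P ∩ K a Sylow p-subgroup of K. Let {T_x}_{x∈X} be a family of closed pro-p subgroups of H continuously indexed by a profinite space X. Then there exists a continuous function c : X → K such that c(x) T_x c(x)^{-1} ≤ P for all x ∈ X. -/
open Pointwise

/-- A topological group is pro-`p` if all of its continuous finite quotients
(i.e. quotients by open normal subgroups) are `p`-groups. -/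
def IsProP (p : ℕ) (G : Type) [Group G] [TopologicalSpace G] : Prop :=
  ∀ (U : Subgroup G) [U.Normal], IsOpen (U : Set G) → IsPGroup p (G ⧸ U)

lemma exists_locallyConstant_selection {X : Type} [TopologicalSpace X] [CompactSpace X]
    [T2Space X] [TotallyDisconnectedSpace X] {ι : Type} (A : ι → Set X)
    (hA : ∀ i, IsOpen (A i)) (hcov : ∀ x, ∃ i, x ∈ A i) :
    ∃ f : X → ι, IsLocallyConstant f ∧ ∀ x, x ∈ A (f x) := by
  classical
  rcases isEmpty_or_nonempty X with hX | hX
  · refine ⟨fun x => (hcov x).choose, fun s => ?_, fun x => (hcov x).choose_spec⟩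
    rw [Set.eq_empty_of_isEmpty ((fun x => (hcov x).choose) ⁻¹' s)]
    exact isOpen_empty
  have hι : Nonempty ι := ⟨(hcov (Classical.arbitrary X)).choose⟩
  have hcl : ∀ x : X, ∃ W : Set X, ∃ i : ι, IsClopen W ∧ x ∈ W ∧ W ⊆ A i := by
    intro x
    obtain ⟨i, hi⟩ := hcov x
    obtain ⟨W, hW, hxW, hWA⟩ := compact_exists_isClopen_in_isOpen (hA i) hi
    exact ⟨W, i, hW, hxW, hWA⟩
  choose W idx hWcl hmem hsub using hcl
  obtain ⟨t, ht⟩ := IsCompact.elim_finite_subcover isCompact_univ W (fun x => (hWcl x).2)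
    (fun y _ => Set.mem_iUnion.mpr ⟨y, hmem y⟩)
  set l := t.toList with hl
  set V : ℕ → Set X := fun j => if hj : j < l.length then W (l.get ⟨j, hj⟩) else ∅ with hV
  set lbl : ℕ → ι := fun j => if hj : j < l.length then idx (l.get ⟨j, hj⟩)
    else Classical.arbitrary ι with hlbl
  have hVcl : ∀ j, IsClopen (V j) := by
    intro j
    by_cases hj : j < l.length
    · simpa [hV, hj] using hWcl _
    · simpa [hV, hj] using isClopen_empty
  have hVA : ∀ j, V j ⊆ A (lbl j) := by
    intro j
    by_cases hj : j < l.length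
    · simpa [hV, hlbl, hj] using hsub _
    · simp [hV, hj]
  have hex : ∀ y : X, ∃ j, y ∈ V j := by
    intro y
    have hy := ht (Set.mem_univ y)
    rw [Set.mem_iUnion₂] at hy
    obtain ⟨x, hxt, hyx⟩ := hy
    obtain ⟨n, hn⟩ := List.mem_iff_get.mp (Finset.mem_toList.mpr hxt)
    exact ⟨n.1, by simp only [hV, hl, n.2, dif_pos]; rw [hn]; exact hyx⟩
  set g : X → ℕ := fun y => Nat.find (hex y) with hg
  have hgV : ∀ y, y ∈ V (g y) := fun y => Nat.find_spec (hex y)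
  have hgmin : ∀ y j, j < g y → y ∉ V j := fun y j hj => Nat.find_min (hex y) hj
  have hglc : IsLocallyConstant g := by
    rw [IsLocallyConstant.iff_exists_open]
    intro y
    refine ⟨V (g y) ∩ ⋂ j ∈ Finset.range (g y), (V j)ᶜ, ?_, ⟨hgV y, ?_⟩, ?_⟩
    · exact (hVcl _).2.inter (isOpen_biInter_finset fun j _ => (hVcl j).1.isOpen_compl)
    · exact Set.mem_biInter fun j hj => hgmin y j (Finset.mem_range.mp hj)
    · rintro z ⟨hz1, hz2⟩
      refine (Nat.find_eq_iff (hex z)).mpr ⟨hz1, fun j hj hzj => ?_⟩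
      exact (Set.mem_iInter₂.mp hz2 j (Finset.mem_range.mpr hj)) hzj
  exact ⟨fun y => lbl (g y), hglc.comp lbl, fun y => hVA _ (hgV y)⟩

/-- Let `p` be a prime, `H` a profinite group and `K` a finite normal
subgroup of `H` with `H/K` pro-`p`.  Let `P` be a closed pro-`p` subgroup of `H` with
`PK = H` and with `P ∩ K` a Sylow `p`-subgroup of `K`.  Then every continuously indexed
family `{T x}_{x ∈ X}` of closed pro-`p` subgroups of `H` can be conjugated into `P` by a
continuous function `c : X → K`. -/
theorem conjugate_family_into_sylow (p : ℕ) (hp : p.Prime)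
    (H : Type) [Group H] [TopologicalSpace H] [IsTopologicalGroup H]
    [CompactSpace H] [T2Space H] [TotallyDisconnectedSpace H]
    (K : Subgroup H) [K.Normal] (hKfin : Finite K)
    (hHK : IsProP p (H ⧸ K))
    (P : Subgroup H) (hPclosed : IsClosed (P : Set H)) (hPp : IsProP p P)
    (hPK : (P : Set H) * (K : Set H) = Set.univ)
    (hSylow : ∃ Pk : Sylow p K, (Pk : Subgroup K) = (P ⊓ K).subgroupOf K)
    (X : Type) [TopologicalSpace X] [CompactSpace X] [T2Space X]
    [TotallyDisconnectedSpace X]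
    (T : X → Subgroup H) (hTclosed : ∀ x, IsClosed (T x : Set H))
    (hTidx : IsClosed {hx : H × X | hx.1 ∈ T hx.2})
    (hTp : ∀ x, IsProP p (T x)) :
    ∃ c : X → H, Continuous c ∧ (∀ x, c x ∈ K) ∧
      ∀ x, ∀ t ∈ T x, c x * t * (c x)⁻¹ ∈ P := by
  classical
  haveI : Fact p.Prime := ⟨hp⟩
  haveI : Finite K := hKfin
  -- every element decomposes as k * a with k ∈ K, a ∈ P
  have hKP : ∀ h : H, ∃ k ∈ K, ∃ a ∈ P, h = k * a := by
    intro h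
    have hh : h ∈ (P : Set H) * (K : Set H) := by rw [hPK]; exact Set.mem_univ h
    obtain ⟨a, ha, b, hb, hab⟩ := Set.mem_mul.mp hh
    refine ⟨a * b * a⁻¹, ‹K.Normal›.conj_mem b hb a, a, ha, by rw [← hab]; group⟩
  -- P has finite index
  have hsurj : Function.Surjective (fun k : K => ((k : H) : H ⧸ P)) := by
    intro q
    obtain ⟨h, rfl⟩ := QuotientGroup.mk_surjective q
    obtain ⟨k, hk, a, ha, rfl⟩ := hKP h
    refine ⟨⟨k, hk⟩, ?_⟩
    show ((k : H) : H ⧸ P) = ((k * a : H) : H ⧸ P)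
    exact QuotientGroup.eq.mpr (by simpa using ha)
  haveI : Finite (H ⧸ P) := Finite.of_surjective _ hsurj
  haveI hPfi : P.FiniteIndex := Subgroup.finiteIndex_of_finite_quotient (H := P)
  -- p does not divide the index of P
  obtain ⟨Pk, hPkEq⟩ := hSylow
  have hcard : Nat.card (H ⧸ P) = Nat.card (K ⧸ (P ⊓ K).subgroupOf K) := by
    apply Nat.card_congr
    symm
    refine Equiv.ofBijective (Quotient.map' (fun k : K => (k : H)) ?_) ⟨?_, ?_⟩
    · intro a b hab
      rw [QuotientGroup.leftRel_apply] at hab ⊢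
      exact (Subgroup.mem_subgroupOf.mp hab).1
    · intro q1 q2
      refine Quotient.inductionOn₂' q1 q2 fun a b h12 => ?_
      apply Quotient.sound'
      rw [QuotientGroup.leftRel_apply]
      have : ((a : H) : H ⧸ P) = ((b : H) : H ⧸ P) := h12
      have hP : (a : H)⁻¹ * b ∈ P := QuotientGroup.eq.mp this
      exact Subgroup.mem_subgroupOf.mpr ⟨hP, (a⁻¹ * b).2⟩
    · intro q
      obtain ⟨k, hk⟩ := hsurj q
      exact ⟨Quotient.mk'' k, hk⟩
  have hndvd : ¬ p ∣ P.index := by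
    have h1 : ¬ p ∣ (Pk : Subgroup K).index := Pk.not_dvd_index
    rw [hPkEq] at h1
    rwa [Subgroup.index_eq_card, hcard, ← Subgroup.index_eq_card]
  -- the open normal subgroup N
  set N := P.normalCore with hNdef
  have hNle : N ≤ P := P.normalCore_le
  have hNclosed : IsClosed (N : Set H) := P.normalCore_isClosed hPclosed
  have hNopen : IsOpen (N : Set H) := N.isOpen_of_isClosed_of_finiteIndex hNclosed
  haveI : Finite (H ⧸ N) := Subgroup.finite_quotient_of_finiteIndex (H := N)
  set π := QuotientGroup.mk' N with hπdef
  have hπsurj : Function.Surjective π := QuotientGroup.mk'_surjective N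
  have hπker : π.ker = N := QuotientGroup.ker_mk' N
  have hkerle : π.ker ≤ P := by rw [hπker]; exact hNle
  -- images of pro-p subgroups are p-groups
  have himg : ∀ S : Subgroup H, IsProP p S → IsPGroup p (S.map π) := by
    intro S hS
    have hker : (π.comp S.subtype).ker = N.subgroupOf S := by
      rw [← MonoidHom.comap_ker, hπker]; rfl
    have hopen : IsOpen ((N.subgroupOf S : Subgroup S) : Set S) := by
      have : ((N.subgroupOf S : Subgroup S) : Set S) = (Subtype.val : S → H) ⁻¹' (N : Set H) :=
        rfl
      rw [this]
      exact hNopen.preimage continuous_subtype_val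
    have hq : IsPGroup p (S ⧸ N.subgroupOf S) := hS _ hopen
    have e1 : (S ⧸ N.subgroupOf S) ≃* (S ⧸ (π.comp S.subtype).ker) :=
      QuotientGroup.quotientMulEquivOfEq hker.symm
    have hq2 : IsPGroup p ((π.comp S.subtype).range) :=
      (hq.of_equiv e1).of_equiv (QuotientGroup.quotientKerEquivRange (π.comp S.subtype))
    have hrange : (π.comp S.subtype).range = S.map π := by
      rw [MonoidHom.range_comp, Subgroup.range_subtype]
    rwa [hrange] at hq2
  -- the image of P is a Sylow subgroup of H ⧸ N
  have hPbar_ndvd : ¬ p ∣ (P.map π).index := by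
    rwa [P.index_map_eq hπsurj hkerle]
  set Psyl : Sylow p (H ⧸ N) := (himg P hPp).toSylow hPbar_ndvd with hPsyl
  have hPsylcoe : (Psyl : Subgroup (H ⧸ N)) = P.map π := rfl
  -- pointwise conjugation
  have key : ∀ x : X, ∃ k, k ∈ K ∧ ∀ t ∈ T x, k * t * k⁻¹ ∈ P := by
    intro x
    obtain ⟨Q, hQ⟩ := (himg (T x) (hTp x)).exists_le_sylow
    obtain ⟨g, hg⟩ := MulAction.exists_smul_eq (H ⧸ N) Q Psyl
    obtain ⟨h, rfl⟩ := hπsurj g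
    have hconj : ∀ t ∈ T x, h * t * h⁻¹ ∈ P := by
      intro t ht
      have h1 : π t ∈ Q := hQ (Subgroup.mem_map_of_mem π ht)
      have h2 : π h * π t * (π h)⁻¹ ∈ (Psyl : Subgroup (H ⧸ N)) := by
        rw [← hg, Sylow.smul_def]
        have : π h * π t * (π h)⁻¹ = MulAut.conj (π h) (π t) := by
          simp [MulAut.conj_apply]
        rw [this]
        exact Subgroup.smul_mem_pointwise_smul _ _ _ h1
      rw [hPsylcoe] at h2
      have h3 : h * t * h⁻¹ ∈ (P.map π).comap π := by
        simp only [Subgroup.mem_comap, map_mul, map_inv]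
        exact h2
      rwa [Subgroup.comap_map_eq, sup_of_le_left hkerle] at h3
    have hh : h ∈ (P : Set H) * (K : Set H) := by rw [hPK]; exact Set.mem_univ h
    obtain ⟨a, ha, b, hb, hab⟩ := Set.mem_mul.mp hh
    refine ⟨b, hb, fun t ht => ?_⟩
    have h4 := hconj t ht
    rw [← hab] at h4
    have hrw : b * t * b⁻¹ = a⁻¹ * (a * b * t * (a * b)⁻¹) * a := by group
    rw [hrw]
    exact P.mul_mem (P.mul_mem (P.inv_mem ha) h4) ha
  -- the sets A k are open
  have hPopen : IsOpen (P : Set H) := P.isOpen_of_isClosed_of_finiteIndex hPclosed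
  set A : K → Set X := fun k => {x | ∀ t ∈ T x, (k : H) * t * (k : H)⁻¹ ∈ P} with hAdef
  have hAopen : ∀ k, IsOpen (A k) := by
    intro k
    set E : Set (H × X) := {hx : H × X | hx.1 ∈ T hx.2} ∩
      {hx : H × X | (k : H) * hx.1 * (k : H)⁻¹ ∉ P} with hEdef
    have hE : IsClosed E := by
      apply hTidx.inter
      have : {hx : H × X | (k : H) * hx.1 * (k : H)⁻¹ ∉ P} =
          (fun hx : H × X => (k : H) * hx.1 * (k : H)⁻¹) ⁻¹' ((P : Set H)ᶜ) := rfl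
      rw [this]
      exact (hPopen.isClosed_compl).preimage
        (((continuous_const.mul continuous_fst).mul continuous_const))
    have him : IsClosed (Prod.snd '' E) := (hE.isCompact.image continuous_snd).isClosed
    have hAeq : A k = (Prod.snd '' E)ᶜ := by
      ext x
      simp only [hAdef, Set.mem_setOf_eq, Set.mem_compl_iff, Set.mem_image, not_exists]
      constructor
      · rintro hx ⟨t, y⟩ ⟨⟨ht, hnt⟩, rfl⟩
        exact hnt (hx t ht)
      · intro hx t ht
        by_contra hnt
        exact hx (t, x) ⟨⟨ht, hnt⟩, rfl⟩
    rw [hAeq]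
    exact him.isOpen_compl
  have hcov : ∀ x, ∃ k : K, x ∈ A k := by
    intro x
    obtain ⟨k, hk, hkP⟩ := key x
    exact ⟨⟨k, hk⟩, hkP⟩
  obtain ⟨f, hf, hfA⟩ := exists_locallyConstant_selection A hAopen hcov
  exact ⟨fun x => ((f x : K) : H), (hf.comp (fun k : K => (k : H))).continuous,
    fun x => (f x).2, fun x t ht => hfA x t ht⟩
end
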